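/- arXiv:1803.06623 — 3 statements merged into one kernel-verified Lean document; each statement's English description precedes it below -/
import Mathlib

section
/- For every n ∈ ℕ, n ≥ 1, and 1 ≤ p < ∞, and every f ∈ S_n^p, one has ‖f‖_∞ ≤ π ‖f‖_{S_1^p} ≤ π^2 ‖f‖_{S_2^p} ≤ ⋯ ≤ π^n ‖f‖_{S_n^p}; in particular ‖f‖_{S_{n-1}^p} ≤ π ‖f‖_{S_n^p}. -/
open MeasureTheory Metric Set Filter

/-- The Hardy space `p`-norm on the unit disk (as an extended real). -/
noncomputable def hardyNorm (p : ℝ) (f : ℂ → ℂ) : ENNReal :=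
  ⨆ r : Set.Ioo (0:ℝ) 1,
    ((∫⁻ θ in Set.Ioc (0:ℝ) (2*Real.pi),
        ENNReal.ofReal (‖f ((r:ℝ) * Complex.exp (θ * Complex.I))‖ ^ p)) /
      ENNReal.ofReal (2*Real.pi)) ^ (1/p)

/-- Sup norm over the unit disk. -/
noncomputable def supNorm (f : ℂ → ℂ) : ENNReal :=
  ⨆ z ∈ Metric.ball (0:ℂ) 1, ENNReal.ofReal (‖f z‖)

/-- The recursively defined norm of `S_n^p`: `‖f‖_{S_n^p} = |f 0| + ‖f'‖_{S_{n-1}^p}`. -/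
noncomputable def snNorm : ℕ → ℝ → (ℂ → ℂ) → ENNReal
  | 0, p, f => hardyNorm p f
  | n+1, p, f => ENNReal.ofReal (‖f 0‖) + snNorm n p (deriv f)

/-- Membership in the Hardy space `H^p` of the unit disk. -/
def MemHp (p : ℝ) (f : ℂ → ℂ) : Prop :=
  DifferentiableOn ℂ f (Metric.ball 0 1) ∧ hardyNorm p f < ⊤

/-- Membership in `S_n^p`: analytic on the disk with `n`-th derivative in `H^p`. -/
def MemS (n : ℕ) (p : ℝ) (f : ℂ → ℂ) : Prop :=
  DifferentiableOn ℂ f (Metric.ball 0 1) ∧ hardyNorm p (iteratedDeriv n f) < ⊤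

/-- Membership in `S_{n,0}^p`: members of `S_n^p` whose first `n` Taylor coefficients vanish. -/
def MemS0 (n : ℕ) (p : ℝ) (f : ℂ → ℂ) : Prop :=
  MemS n p f ∧ ∀ m < n, iteratedDeriv m f 0 = 0

/-- `(V_n f)(z) = (1/(n-1)!) ∫_0^z (z-ζ)^{n-1} f(ζ) dζ`, along the segment `ζ = t z`. -/
noncomputable def Vop (n : ℕ) (f : ℂ → ℂ) (z : ℂ) : ℂ :=
  (1 / (Nat.factorial (n-1) : ℂ)) *
    ∫ t in (0:ℝ)..1, z * (z - (t:ℂ) * z) ^ (n-1) * f ((t:ℂ) * z)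

/-- The Volterra operator `(T_z f)(z) = ∫_0^z f(ω) dω` along the segment. -/
noncomputable def Volterra (f : ℂ → ℂ) (z : ℂ) : ℂ :=
  ∫ t in (0:ℝ)..1, z * f ((t:ℂ) * z)

namespace NormChainAux

open Complex

/-- one term of the Hardy norm sup -/
noncomputable def circTerm (p : ℝ) (f : ℂ → ℂ) (r : ℝ) : ENNReal :=
  ((∫⁻ θ in Set.Ioc (0:ℝ) (2*Real.pi),
      ENNReal.ofReal (‖f ((r:ℂ) * Complex.exp ((θ:ℂ) * Complex.I))‖ ^ p)) /
    ENNReal.ofReal (2*Real.pi)) ^ (1/p)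

lemma hardy_eq (p : ℝ) (f : ℂ → ℂ) :
    hardyNorm p f = ⨆ r : Set.Ioo (0:ℝ) 1, circTerm p f (r:ℝ) := rfl

lemma circTerm_le_hardy (p : ℝ) (f : ℂ → ℂ) {r : ℝ} (hr : r ∈ Set.Ioo (0:ℝ) 1) :
    circTerm p f r ≤ hardyNorm p f := by
  rw [hardy_eq]
  exact le_iSup (fun s : Set.Ioo (0:ℝ) 1 => circTerm p f (s:ℝ)) ⟨r, hr⟩

lemma two_pi_pos : (0:ℝ) < 2*Real.pi := by linarith [Real.pi_pos]

lemma m_ne_zero : ENNReal.ofReal (2*Real.pi) ≠ 0 := by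
  simp only [ne_eq, ENNReal.ofReal_eq_zero, not_le]
  exact two_pi_pos

lemma m_ne_top : ENNReal.ofReal (2*Real.pi) ≠ ⊤ := ENNReal.ofReal_ne_top

lemma volume_Ioc_two_pi : (volume.restrict (Set.Ioc (0:ℝ) (2*Real.pi))) Set.univ
    = ENNReal.ofReal (2*Real.pi) := by
  rw [Measure.restrict_apply_univ, Real.volume_Ioc, sub_zero]

lemma volume_Ioc_one : (volume.restrict (Set.Ioc (0:ℝ) 1)) Set.univ = 1 := by
  rw [Measure.restrict_apply_univ, Real.volume_Ioc, sub_zero, ENNReal.ofReal_one]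

lemma deriv_diffOn {g : ℂ → ℂ} (hg : DifferentiableOn ℂ g (ball (0:ℂ) 1)) :
    DifferentiableOn ℂ (deriv g) (ball (0:ℂ) 1) :=
  ((hg.analyticOnNhd isOpen_ball).deriv).differentiableOn

lemma circle_mem_ball {r : ℝ} (hr0 : 0 ≤ r) (hr1 : r < 1) (θ : ℝ) :
    ((r:ℂ) * Complex.exp ((θ:ℂ) * Complex.I)) ∈ ball (0:ℂ) 1 := by
  rw [mem_ball_zero_iff]
  rw [norm_mul, Complex.norm_exp_ofReal_mul_I, mul_one, Complex.norm_real]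
  rwa [Real.norm_eq_abs, _root_.abs_of_nonneg hr0]

/-- FTC along the segment from `0` to `w`. -/
lemma ftc_seg {g : ℂ → ℂ} (hg : DifferentiableOn ℂ g (ball (0:ℂ) 1)) {w : ℂ}
    (hw : w ∈ ball (0:ℂ) 1) :
    g w = g 0 + ∫ t in (0:ℝ)..1, w * deriv g ((t:ℂ) * w) := by
  rw [mem_ball_zero_iff] at hw
  have hmem : ∀ t ∈ Set.Icc (0:ℝ) 1, ((t:ℂ) * w) ∈ ball (0:ℂ) 1 := by
    intro t ht
    rw [mem_ball_zero_iff, norm_mul, Complex.norm_real, Real.norm_eq_abs,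
      _root_.abs_of_nonneg ht.1]
    nlinarith [norm_nonneg w, ht.2]
  have hd : ∀ t ∈ Set.uIcc (0:ℝ) 1, HasDerivAt (fun s : ℝ => g ((s:ℂ) * w))
      (w * deriv g ((t:ℂ) * w)) t := by
    intro t ht
    rw [Set.uIcc_of_le zero_le_one] at ht
    have h1 : HasDerivAt g (deriv g ((t:ℂ)*w)) ((t:ℂ)*w) :=
      (hg.differentiableAt (isOpen_ball.mem_nhds (hmem t ht))).hasDerivAt
    have h2 : HasDerivAt (fun u : ℂ => u * w) w (t:ℂ) := by
      simpa using (hasDerivAt_id ((t:ℂ))).mul_const w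
    have h3 := (h1.comp (t:ℂ) h2).comp_ofReal
    simpa [Function.comp, mul_comm] using h3
  have hdc : ContinuousOn (deriv g) (ball (0:ℂ) 1) := (deriv_diffOn hg).continuousOn
  have hcont : ContinuousOn (fun t : ℝ => w * deriv g ((t:ℂ)*w)) (Set.uIcc (0:ℝ) 1) := by
    apply ContinuousOn.mul continuousOn_const
    apply hdc.comp ((Complex.continuous_ofReal.mul continuous_const).continuousOn)
    intro t ht
    rw [Set.uIcc_of_le zero_le_one] at ht
    exact hmem t ht
  have key := intervalIntegral.integral_eq_sub_of_hasDerivAt hd hcont.intervalIntegrable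
  rw [key]
  push_cast
  simp

/-- Hölder against 1 : `((∫ h)/m)^p ≤ (∫ h^p)/m` for a measure of total mass `m`. -/
lemma holder_pow {μ : Measure ℝ} {h : ℝ → ENNReal} (hm : AEMeasurable h μ) {p : ℝ} (hp : 1 ≤ p)
    {m : ENNReal} (hμ : μ Set.univ = m) (hm0 : m ≠ 0) (hmt : m ≠ ⊤) :
    ((∫⁻ x, h x ∂μ) / m) ^ p ≤ (∫⁻ x, h x ^ p ∂μ) / m := by
  rcases eq_or_lt_of_le hp with heq | hlt
  · simp [← heq]
  have hp0 : (0:ℝ) < p := lt_trans one_pos hlt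
  set q : ℝ := p / (p - 1) with hq
  have hpq : p.HolderConjugate q := Real.HolderConjugate.conjExponent hlt
  have h1 : (∫⁻ x, h x ∂μ) ≤ (∫⁻ x, h x ^ p ∂μ) ^ (1/p) * m ^ (1/q) := by
    have := ENNReal.lintegral_mul_le_Lp_mul_Lq μ hpq hm
      (aemeasurable_const (b := (1:ENNReal)))
    simpa [hμ] using this
  set A := ∫⁻ x, h x ^ p ∂μ with hA
  calc ((∫⁻ x, h x ∂μ) / m) ^ p ≤ ((A ^ (1/p) * m ^ (1/q)) / m) ^ p := by
        gcongr
  _ = A / m := by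
        have hmp0 : m ^ p ≠ 0 := by
          simp [ENNReal.rpow_eq_zero_iff, hm0, hmt, hp0, hp0.ne']
        have hmpt : m ^ p ≠ ⊤ := by
          simp [ENNReal.rpow_eq_top_iff, hm0, hmt, hp0, not_lt.2 hp0.le]
        rw [ENNReal.div_rpow_of_nonneg _ _ hp0.le, ENNReal.mul_rpow_of_nonneg _ _ hp0.le,
          ← ENNReal.rpow_mul A, ← ENNReal.rpow_mul m]
        have e1 : (1:ℝ)/p * p = 1 := by field_simp
        have e2 : (1:ℝ)/q * p = p - 1 := by rw [hq]; field_simp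
        have hq0 : (0:ℝ) < p - 1 := by linarith
        have hmp0' : m ^ (p-1) ≠ 0 := by
          simp [ENNReal.rpow_eq_zero_iff, hm0, hmt, hq0, hq0.ne']
        have hmpt' : m ^ (p-1) ≠ ⊤ := by
          simp [ENNReal.rpow_eq_top_iff, hm0, hmt, hq0, not_lt.2 hq0.le]
        have e3 : m ^ p = m ^ (p-1) * m := by
          conv_lhs => rw [show p = (p-1)+1 by ring]
          rw [ENNReal.rpow_add _ _ hm0 hmt, ENNReal.rpow_one]
        rw [e1, ENNReal.rpow_one, e2, mul_div_assoc]
        calc A * (m ^ (p-1) / m ^ p) = A * ((m ^ (p-1) * 1) / (m ^ (p-1) * m)) := by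
              rw [mul_one, ← e3]
        _ = A * (1/m) := by rw [ENNReal.mul_div_mul_left _ _ hmp0' hmpt']
        _ = A / m := by rw [one_div, div_eq_mul_inv]

lemma holder_div {μ : Measure ℝ} {h : ℝ → ENNReal} (hm : AEMeasurable h μ) {p : ℝ} (hp : 1 ≤ p)
    {m : ENNReal} (hμ : μ Set.univ = m) (hm0 : m ≠ 0) (hmt : m ≠ ⊤) :
    (∫⁻ x, h x ∂μ) / m ≤ ((∫⁻ x, h x ^ p ∂μ) / m) ^ (1/p) := by
  have hp0 : (0:ℝ) < p := lt_of_lt_of_le one_pos hp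
  have h2 := holder_pow hm hp hμ hm0 hmt
  calc (∫⁻ x, h x ∂μ) / m = (((∫⁻ x, h x ∂μ) / m) ^ p) ^ (1/p) := by
        rw [← ENNReal.rpow_mul, mul_one_div_cancel hp0.ne', ENNReal.rpow_one]
  _ ≤ ((∫⁻ x, h x ^ p ∂μ) / m) ^ (1/p) := by gcongr


lemma cont_circle_comp {g : ℂ → ℂ} (hg : ContinuousOn g (ball (0:ℂ) 1)) {r : ℝ}
    (hr0 : 0 ≤ r) (hr1 : r < 1) :
    Continuous (fun θ : ℝ => g ((r:ℂ) * Complex.exp ((θ:ℂ) * Complex.I))) := by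
  apply hg.comp_continuous
  · exact continuous_const.mul ((Complex.continuous_ofReal.mul continuous_const).cexp)
  · exact circle_mem_ball hr0 hr1

lemma meanOne_le_hardy {g : ℂ → ℂ} (hg : DifferentiableOn ℂ g (ball (0:ℂ) 1)) {p : ℝ} (hp : 1 ≤ p)
    {r : ℝ} (hr : r ∈ Set.Ioo (0:ℝ) 1) :
    ENNReal.ofReal ((∫ θ in Set.Ioc (0:ℝ) (2*Real.pi),
        ‖g ((r:ℂ) * Complex.exp ((θ:ℂ) * Complex.I))‖) / (2*Real.pi))
      ≤ hardyNorm p g := by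
  obtain ⟨hr0, hr1⟩ := hr
  have hp0 : (0:ℝ) < p := lt_of_lt_of_le one_pos hp
  have hc : Continuous (fun θ : ℝ => ‖g ((r:ℂ) * Complex.exp ((θ:ℂ)*Complex.I))‖) :=
    continuous_norm.comp (cont_circle_comp hg.continuousOn hr0.le hr1)
  have hint : IntegrableOn (fun θ : ℝ => ‖g ((r:ℂ)*Complex.exp ((θ:ℂ)*Complex.I))‖)
      (Set.Ioc (0:ℝ) (2*Real.pi)) := hc.integrableOn_Ioc
  rw [ENNReal.ofReal_div_of_pos two_pi_pos,
    MeasureTheory.ofReal_integral_eq_lintegral_ofReal hint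
      (ae_of_all _ (fun θ => norm_nonneg _))]
  have key := holder_div (μ := volume.restrict (Set.Ioc (0:ℝ) (2*Real.pi)))
      (h := fun θ => ENNReal.ofReal (‖g ((r:ℂ)*Complex.exp ((θ:ℂ)*Complex.I))‖))
      (hc.measurable.ennreal_ofReal.aemeasurable) hp volume_Ioc_two_pi m_ne_zero m_ne_top
  refine le_trans key ?_
  have hrw : (∫⁻ θ in Set.Ioc (0:ℝ) (2*Real.pi),
      (ENNReal.ofReal (‖g ((r:ℂ)*Complex.exp ((θ:ℂ)*Complex.I))‖)) ^ p)
      = ∫⁻ θ in Set.Ioc (0:ℝ) (2*Real.pi),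
        ENNReal.ofReal (‖g ((r:ℂ)*Complex.exp ((θ:ℂ)*Complex.I))‖ ^ p) :=
    lintegral_congr (fun θ => ENNReal.ofReal_rpow_of_nonneg (norm_nonneg _) hp0.le)
  rw [hrw]
  exact circTerm_le_hardy p g ⟨hr0, hr1⟩

lemma circTerm_le_step {p : ℝ} (hp : 1 ≤ p) {g : ℂ → ℂ}
    (hg : DifferentiableOn ℂ g (ball (0:ℂ) 1)) {r : ℝ} (hr : r ∈ Set.Ioo (0:ℝ) 1) :
    circTerm p g r ≤ ENNReal.ofReal (‖g 0‖) + hardyNorm p (deriv g) := by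
  obtain ⟨hr0, hr1⟩ := hr
  have hp0 : (0:ℝ) < p := lt_of_lt_of_le one_pos hp
  set H' := hardyNorm p (deriv g) with hH'
  set c : ENNReal := ENNReal.ofReal (‖g 0‖) with hcdef
  set m : ENNReal := ENNReal.ofReal (2*Real.pi) with hmdef
  have hder_meas : Measurable (deriv g) := measurable_deriv g
  have hdc : ContinuousOn (deriv g) (ball (0:ℂ) 1) := (deriv_diffOn hg).continuousOn
  -- the inner function
  have hargc : Continuous (fun x : ℝ × ℝ =>
      ((x.2:ℂ)) * ((r:ℂ) * Complex.exp ((x.1:ℂ) * Complex.I))) :=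
    (Complex.continuous_ofReal.comp continuous_snd).mul
      (continuous_const.mul (((Complex.continuous_ofReal.comp continuous_fst).mul
        continuous_const).cexp))
  have hFmeas : Measurable (Function.uncurry fun θ t : ℝ =>
      ENNReal.ofReal (r * ‖deriv g
        ((t:ℂ) * ((r:ℂ) * Complex.exp ((θ:ℂ) * Complex.I)))‖)) := by
    apply Measurable.ennreal_ofReal
    apply Measurable.const_mul
    exact continuous_norm.measurable.comp (hder_meas.comp hargc.measurable)
  set u : ℝ → ENNReal := fun θ => ∫⁻ t in Set.Ioc (0:ℝ) 1,
      ENNReal.ofReal (r * ‖deriv g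
        ((t:ℂ) * ((r:ℂ) * Complex.exp ((θ:ℂ) * Complex.I)))‖) with hu
  have humeas : Measurable u := hFmeas.lintegral_prod_right
  -- membership
  have hmem : ∀ (θ t : ℝ), t ∈ Set.Icc (0:ℝ) 1 →
      (t:ℂ) * ((r:ℂ) * Complex.exp ((θ:ℂ) * Complex.I)) ∈ ball (0:ℂ) 1 := by
    intro θ t ht
    rw [mem_ball_zero_iff, norm_mul, norm_mul, Complex.norm_real, Complex.norm_real,
      Complex.norm_exp_ofReal_mul_I, mul_one, Real.norm_eq_abs, Real.norm_eq_abs,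
      _root_.abs_of_nonneg ht.1, _root_.abs_of_nonneg hr0.le]
    nlinarith [ht.2, hr0, hr1]
  -- pointwise inner continuity in t for fixed θ
  have hcontd : ∀ θ : ℝ, ContinuousOn (fun t : ℝ => r * ‖deriv g
      ((t:ℂ) * ((r:ℂ) * Complex.exp ((θ:ℂ) * Complex.I)))‖) (Set.Icc (0:ℝ) 1) := by
    intro θ
    apply ContinuousOn.mul continuousOn_const
    apply continuous_norm.comp_continuousOn
    apply hdc.comp ((Complex.continuous_ofReal.mul continuous_const).continuousOn)
    intro t ht
    exact hmem θ t ht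
  -- pointwise bound
  have hpt : ∀ θ : ℝ, ENNReal.ofReal
      (‖g ((r:ℂ) * Complex.exp ((θ:ℂ) * Complex.I))‖ ^ p)
      ≤ ((fun _ : ℝ => c) + u) θ ^ p := by
    intro θ
    have hwball : ((r:ℂ) * Complex.exp ((θ:ℂ) * Complex.I)) ∈ ball (0:ℂ) 1 :=
      circle_mem_ball hr0.le hr1 θ
    have hftc := ftc_seg hg hwball
    have hnorm_eq : Set.EqOn (fun t : ℝ => ‖((r:ℂ) * Complex.exp ((θ:ℂ) * Complex.I)) *
          deriv g ((t:ℂ) * ((r:ℂ) * Complex.exp ((θ:ℂ) * Complex.I)))‖)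
        (fun t : ℝ => r * ‖deriv g
          ((t:ℂ) * ((r:ℂ) * Complex.exp ((θ:ℂ) * Complex.I)))‖) (Set.uIcc (0:ℝ) 1) := by
      intro t _
      simp only [norm_mul, map_mul, Complex.norm_exp_ofReal_mul_I,
        Complex.norm_real, Real.norm_eq_abs, mul_one, _root_.abs_of_nonneg hr0.le]
    have hintt : IntervalIntegrable (fun t : ℝ => r * ‖deriv g
        ((t:ℂ) * ((r:ℂ) * Complex.exp ((θ:ℂ) * Complex.I)))‖) volume 0 1 := by
      apply ContinuousOn.intervalIntegrable
      rw [Set.uIcc_of_le zero_le_one]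
      exact hcontd θ
    have habs : ‖g ((r:ℂ) * Complex.exp ((θ:ℂ) * Complex.I))‖
        ≤ ‖g 0‖ + ∫ t in (0:ℝ)..1, r * ‖deriv g
          ((t:ℂ) * ((r:ℂ) * Complex.exp ((θ:ℂ) * Complex.I)))‖ := by
      rw [hftc]
      refine le_trans (norm_add_le _ _) ?_
      apply add_le_add_right
      refine le_trans (intervalIntegral.norm_integral_le_integral_norm zero_le_one) ?_
      rw [intervalIntegral.integral_congr hnorm_eq]
    have hA_nonneg : (0:ℝ) ≤ ∫ t in (0:ℝ)..1, r * ‖deriv g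
        ((t:ℂ) * ((r:ℂ) * Complex.exp ((θ:ℂ) * Complex.I)))‖ := by
      apply intervalIntegral.integral_nonneg zero_le_one
      intro t _
      positivity
    have hofA : ENNReal.ofReal (∫ t in (0:ℝ)..1, r * ‖deriv g
        ((t:ℂ) * ((r:ℂ) * Complex.exp ((θ:ℂ) * Complex.I)))‖) = u θ := by
      rw [intervalIntegral.integral_of_le zero_le_one,
        MeasureTheory.ofReal_integral_eq_lintegral_ofReal
          (((hcontd θ).integrableOn_compact isCompact_Icc).mono_set Set.Ioc_subset_Icc_self)
          (ae_of_all _ (fun t => by positivity))]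
    have h1 : ENNReal.ofReal (‖g ((r:ℂ) * Complex.exp ((θ:ℂ) * Complex.I))‖)
        ≤ c + u θ := by
      refine le_trans (ENNReal.ofReal_le_ofReal habs) ?_
      rw [ENNReal.ofReal_add (norm_nonneg _) hA_nonneg, hofA, hcdef]
    calc ENNReal.ofReal (‖g ((r:ℂ) * Complex.exp ((θ:ℂ) * Complex.I))‖ ^ p)
        = (ENNReal.ofReal (‖g ((r:ℂ) * Complex.exp ((θ:ℂ) * Complex.I))‖)) ^ p :=
          (ENNReal.ofReal_rpow_of_nonneg (norm_nonneg _) hp0.le).symm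
    _ ≤ (c + u θ) ^ p := by gcongr
    _ = ((fun _ : ℝ => c) + u) θ ^ p := rfl
  -- u-term estimate
  have hrpmeas : Measurable (Function.uncurry fun θ t : ℝ =>
      (ENNReal.ofReal (r * ‖deriv g
        ((t:ℂ) * ((r:ℂ) * Complex.exp ((θ:ℂ) * Complex.I)))‖)) ^ p) :=
    (ENNReal.continuous_rpow_const.measurable).comp hFmeas
  have huterm : (∫⁻ θ in Set.Ioc (0:ℝ) (2*Real.pi), u θ ^ p) ≤ H' ^ p * m := by
    have step1 : ∀ θ : ℝ, u θ ^ p ≤ ∫⁻ t in Set.Ioc (0:ℝ) 1,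
        (ENNReal.ofReal (r * ‖deriv g
          ((t:ℂ) * ((r:ℂ) * Complex.exp ((θ:ℂ) * Complex.I)))‖)) ^ p := by
      intro θ
      have hmeast : AEMeasurable (fun t : ℝ => ENNReal.ofReal (r * ‖deriv g
          ((t:ℂ) * ((r:ℂ) * Complex.exp ((θ:ℂ) * Complex.I)))‖))
          (volume.restrict (Set.Ioc (0:ℝ) 1)) := by
        apply Measurable.aemeasurable
        apply Measurable.ennreal_ofReal
        apply Measurable.const_mul
        apply continuous_norm.measurable.comp
        exact hder_meas.comp ((Complex.continuous_ofReal.mul continuous_const).measurable)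
      have := holder_pow hmeast hp volume_Ioc_one one_ne_zero ENNReal.one_ne_top
      simpa using this
    refine le_trans (lintegral_mono step1) ?_
    rw [lintegral_lintegral_swap hrpmeas.aemeasurable]
    have inner_bound : ∀ t ∈ Set.Ioc (0:ℝ) 1, (∫⁻ θ in Set.Ioc (0:ℝ) (2*Real.pi),
        (ENNReal.ofReal (r * ‖deriv g
          ((t:ℂ) * ((r:ℂ) * Complex.exp ((θ:ℂ) * Complex.I)))‖)) ^ p) ≤ H' ^ p * m := by
      intro t ht
      have htr : t*r ∈ Set.Ioo (0:ℝ) 1 :=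
        ⟨mul_pos ht.1 hr0, lt_of_le_of_lt (by nlinarith [ht.2, hr0.le]) hr1⟩
      have h1 : ∀ θ : ℝ, (ENNReal.ofReal (r * ‖deriv g
          ((t:ℂ) * ((r:ℂ) * Complex.exp ((θ:ℂ) * Complex.I)))‖)) ^ p
          ≤ ENNReal.ofReal (‖deriv g
            (((t*r:ℝ):ℂ) * Complex.exp ((θ:ℂ) * Complex.I))‖ ^ p) := by
        intro θ
        have harg : (t:ℂ) * ((r:ℂ) * Complex.exp ((θ:ℂ) * Complex.I))
            = ((t*r:ℝ):ℂ) * Complex.exp ((θ:ℂ) * Complex.I) := by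
          push_cast
          ring
        rw [harg, ENNReal.ofReal_rpow_of_nonneg (by positivity) hp0.le]
        apply ENNReal.ofReal_le_ofReal
        rw [Real.mul_rpow hr0.le (norm_nonneg _)]
        have hr1' : r ^ p ≤ 1 := Real.rpow_le_one hr0.le hr1.le hp0.le
        have habsp : (0:ℝ) ≤ ‖deriv g
            (((t*r:ℝ):ℂ) * Complex.exp ((θ:ℂ) * Complex.I))‖ ^ p :=
          Real.rpow_nonneg (norm_nonneg _) p
        nlinarith [habsp, hr1']
      refine le_trans (lintegral_mono h1) ?_
      have hterm := circTerm_le_hardy p (deriv g) htr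
      unfold circTerm at hterm
      have h2 : (∫⁻ θ in Set.Ioc (0:ℝ) (2*Real.pi),
          ENNReal.ofReal (‖deriv g
            (((t*r:ℝ):ℂ) * Complex.exp ((θ:ℂ) * Complex.I))‖ ^ p)) / m ≤ H' ^ p := by
        have h3 := ENNReal.rpow_le_rpow hterm hp0.le
        rwa [← ENNReal.rpow_mul, one_div_mul_cancel hp0.ne', ENNReal.rpow_one] at h3
      exact (ENNReal.div_le_iff_le_mul (Or.inl m_ne_zero) (Or.inl m_ne_top)).1 h2
    refine le_trans (setLIntegral_mono (by fun_prop) inner_bound) ?_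
    rw [setLIntegral_const]
    rw [show volume (Set.Ioc (0:ℝ) 1) = 1 by
      rw [Real.volume_Ioc, sub_zero, ENNReal.ofReal_one], mul_one]
  -- Minkowski and final algebra
  have hmink := ENNReal.lintegral_Lp_add_le
    (μ := volume.restrict (Set.Ioc (0:ℝ) (2*Real.pi)))
    (f := fun _ : ℝ => c) (g := u) aemeasurable_const humeas.aemeasurable hp
  have hconst : (∫⁻ _ in Set.Ioc (0:ℝ) (2*Real.pi), c ^ p) = c ^ p * m := by
    rw [setLIntegral_const, hmdef]
    rw [Real.volume_Ioc, sub_zero]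
  have hm1p0 : m ^ (1/p) ≠ 0 :=
    (ENNReal.rpow_pos (by rw [hmdef]; exact ENNReal.ofReal_pos.2 two_pi_pos)
      (by rw [hmdef]; exact m_ne_top)).ne'
  have hm1pt : m ^ (1/p) ≠ ⊤ :=
    ENNReal.rpow_ne_top_of_nonneg (one_div_nonneg.2 hp0.le) (by rw [hmdef]; exact m_ne_top)
  have hcollapse : ∀ x : ENNReal, (x ^ p) ^ (1/p) = x := by
    intro x
    rw [← ENNReal.rpow_mul, mul_one_div_cancel hp0.ne', ENNReal.rpow_one]
  unfold circTerm
  calc ((∫⁻ θ in Set.Ioc (0:ℝ) (2*Real.pi),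
      ENNReal.ofReal (‖g ((r:ℂ) * Complex.exp ((θ:ℂ) * Complex.I))‖ ^ p)) / m) ^ (1/p)
      ≤ ((∫⁻ θ in Set.Ioc (0:ℝ) (2*Real.pi), ((fun _ : ℝ => c) + u) θ ^ p) / m) ^ (1/p) := by
        gcongr with θ
        exact hpt θ
  _ = (∫⁻ θ in Set.Ioc (0:ℝ) (2*Real.pi), ((fun _ : ℝ => c) + u) θ ^ p) ^ (1/p) *
        (m ^ (1/p))⁻¹ := by
        rw [ENNReal.div_rpow_of_nonneg _ _ (one_div_nonneg.2 hp0.le), div_eq_mul_inv]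
  _ ≤ ((c ^ p * m) ^ (1/p) + (H' ^ p * m) ^ (1/p)) * (m ^ (1/p))⁻¹ := by
        gcongr
        refine le_trans hmink ?_
        rw [hconst]
        gcongr
  _ = (c + H') * (m ^ (1/p)) * (m ^ (1/p))⁻¹ := by
        rw [ENNReal.mul_rpow_of_nonneg _ _ (one_div_nonneg.2 hp0.le),
          ENNReal.mul_rpow_of_nonneg _ _ (one_div_nonneg.2 hp0.le), hcollapse, hcollapse,
          add_mul]
        ring
  _ = c + H' := by
        rw [mul_assoc, ENNReal.mul_inv_cancel hm1p0 hm1pt, mul_one]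

lemma hardy_le_step {p : ℝ} (hp : 1 ≤ p) {g : ℂ → ℂ}
    (hg : DifferentiableOn ℂ g (ball (0:ℂ) 1)) :
    hardyNorm p g ≤ ENNReal.ofReal (‖g 0‖) + hardyNorm p (deriv g) := by
  rw [hardy_eq p g]
  exact iSup_le (fun r => circTerm_le_step hp hg r.2)


lemma kernel_bound {z ζ : ℂ} (h : ‖z‖ < ‖ζ‖) {ρ : ℝ}
    (hρ : ‖ζ‖ = ρ) :
    ‖-(Complex.log (1 - z/ζ)) +
      Complex.log (1 - (starRingEnd ℂ) z * ζ / ((ρ:ℂ))^2)‖ ≤ Real.pi := by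
  have hζpos : 0 < ‖ζ‖ := lt_of_le_of_lt (norm_nonneg z) h
  have hζ0 : ζ ≠ 0 := by
    intro hzero; rw [hzero] at hζpos; simp at hζpos
  set w := z / ζ with hw
  have habs : ‖w‖ < 1 := by
    rw [hw, norm_div, div_lt_one hζpos]; exact h
  have hre : 0 < (1 - w).re := by
    have h1 : w.re ≤ ‖w‖ := Complex.re_le_norm w
    simp only [Complex.sub_re, Complex.one_re]
    linarith
  have hconj : (starRingEnd ℂ) z * ζ / ((ρ:ℂ))^2 = (starRingEnd ℂ) w := by
    have hρ2 : ((ρ:ℂ))^2 = ζ * (starRingEnd ℂ) ζ := by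
      rw [Complex.mul_conj, Complex.normSq_eq_norm_sq, hρ]
      push_cast
      ring
    have hcζ : (starRingEnd ℂ) ζ ≠ 0 := by simpa using hζ0
    rw [hρ2, hw, map_div₀]
    field_simp
  have harg : (1 - w).arg ≠ Real.pi := by
    intro hpi
    have := Complex.arg_eq_pi_iff.1 hpi
    linarith [this.1]
  have hconj1 : (1:ℂ) - (starRingEnd ℂ) w = (starRingEnd ℂ) (1 - w) := by
    rw [map_sub, map_one]
  rw [hconj, hconj1, Complex.log_conj _ harg]
  have hexpr : -(Complex.log (1 - w)) + (starRingEnd ℂ) (Complex.log (1 - w))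
      = -(Complex.log (1 - w) - (starRingEnd ℂ) (Complex.log (1 - w))) := by ring
  rw [hexpr, norm_neg, Complex.sub_conj, norm_mul, Complex.norm_real, Real.norm_eq_abs,
    Complex.norm_I, mul_one, Complex.log_im]
  have harg2 : |(1 - w).arg| ≤ Real.pi / 2 := Complex.abs_arg_le_pi_div_two_iff.2 hre.le
  rw [abs_mul, abs_of_pos (by norm_num : (0:ℝ) < 2)]
  linarith [harg2]

lemma repr_integral {g : ℂ → ℂ} (hg : DifferentiableOn ℂ g (ball (0:ℂ) 1)) {z : ℂ} {ρ : ℝ}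
    (hz : ‖z‖ < ρ) (hρ1 : ρ < 1) :
    ∫ t in Set.Ioc (0:ℝ) 1, (z * g ((t:ℂ)*z))
      = (2*Real.pi*Complex.I : ℂ)⁻¹ * ∫ θ in Set.Ioc (0:ℝ) (2*Real.pi),
          ((circleMap 0 ρ θ * Complex.I) *
            (-(Complex.log (1 - z / circleMap 0 ρ θ)) * g (circleMap 0 ρ θ))) := by
  have hρ0 : 0 < ρ := lt_of_le_of_lt (norm_nonneg z) hz
  have h2πI : (2*Real.pi*Complex.I : ℂ) ≠ 0 :=
    mul_ne_zero (mul_ne_zero two_ne_zero (Complex.ofReal_ne_zero.2 Real.pi_ne_zero))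
      Complex.I_ne_zero
  have habs_c : ∀ θ : ℝ, ‖circleMap 0 ρ θ‖ = ρ := by
    intro θ; rw [norm_circleMap_zero, _root_.abs_of_pos hρ0]
  have hc0 : ∀ θ : ℝ, circleMap 0 ρ θ ≠ 0 := by
    intro θ h
    have h2 := habs_c θ
    rw [h, norm_zero] at h2
    exact hρ0.ne h2
  have hcball : ∀ θ : ℝ, circleMap 0 ρ θ ∈ ball (0:ℂ) 1 := by
    intro θ; rw [mem_ball_zero_iff, habs_c θ]; exact hρ1
  have habstz : ∀ t ∈ Set.Icc (0:ℝ) 1, ‖(t:ℂ)*z‖ < ρ := by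
    intro t ht
    rw [norm_mul, Complex.norm_real, Real.norm_eq_abs, _root_.abs_of_nonneg ht.1]
    nlinarith [norm_nonneg z, ht.2, hz]
  have hsub0 : ∀ (θ t : ℝ), t ∈ Set.Icc (0:ℝ) 1 → circleMap 0 ρ θ - (t:ℂ)*z ≠ 0 := by
    intro θ t ht h
    rw [sub_eq_zero] at h
    have h1 := habstz t ht
    rw [← h, habs_c] at h1
    exact lt_irrefl _ h1
  set K : ℝ → ℝ → ℂ := fun t θ => (circleMap 0 ρ θ * Complex.I) *
      ((z / (circleMap 0 ρ θ - (t:ℂ)*z)) * g (circleMap 0 ρ θ)) with hK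
  -- Step A : Cauchy formula pointwise in t
  have hstepA : ∀ t ∈ Set.Ioc (0:ℝ) 1, z * g ((t:ℂ)*z)
      = (2*Real.pi*Complex.I : ℂ)⁻¹ * ∫ θ in Set.Ioc (0:ℝ) (2*Real.pi), K t θ := by
    intro t ht
    have ht' : t ∈ Set.Icc (0:ℝ) 1 := ⟨ht.1.le, ht.2⟩
    have htz : (t:ℂ)*z ∈ ball (0:ℂ) ρ := by
      rw [mem_ball_zero_iff]
      exact habstz t ht'
    have hgc : DifferentiableOn ℂ g (closedBall (0:ℂ) ρ) :=
      hg.mono (closedBall_subset_ball hρ1)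
    have hcau := hgc.circleIntegral_sub_inv_smul htz
    rw [circleIntegral] at hcau
    have h2 : ∫ θ in (0:ℝ)..(2*Real.pi), K t θ = (2*Real.pi*Complex.I) * (z * g ((t:ℂ)*z)) := by
      have e0 : (2*Real.pi*Complex.I) * (z * g ((t:ℂ)*z))
          = z * ((2*Real.pi*Complex.I : ℂ) • g ((t:ℂ)*z)) := by
        simp only [smul_eq_mul]; ring
      rw [e0, ← hcau, ← intervalIntegral.integral_const_mul]
      apply intervalIntegral.integral_congr
      intro θ _
      simp only [hK, smul_eq_mul, deriv_circleMap]
      have hne := hsub0 θ t ht'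
      field_simp
    rw [intervalIntegral.integral_of_le two_pi_pos.le] at h2
    rw [h2, ← mul_assoc, inv_mul_cancel₀ h2πI, one_mul]
  -- continuity of the kernel on the rectangle
  have hKcont : ContinuousOn (fun x : ℝ × ℝ => K x.1 x.2)
      ((Set.Icc (0:ℝ) 1) ×ˢ (Set.Icc (0:ℝ) (2*Real.pi))) := by
    have hc_cont : Continuous fun x : ℝ × ℝ => circleMap 0 ρ x.2 :=
      (continuous_circleMap 0 ρ).comp continuous_snd
    have htz_cont : Continuous fun x : ℝ × ℝ => ((x.1:ℂ)) * z :=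
      (Complex.continuous_ofReal.comp continuous_fst).mul continuous_const
    simp only [hK]
    apply ContinuousOn.mul
    · exact (hc_cont.mul continuous_const).continuousOn
    apply ContinuousOn.mul
    · apply ContinuousOn.div continuousOn_const (hc_cont.sub htz_cont).continuousOn
      intro x hx
      exact hsub0 x.2 x.1 hx.1
    · apply hg.continuousOn.comp hc_cont.continuousOn
      intro x _
      exact hcball x.2
  have hKint : Integrable (Function.uncurry K)
      ((volume.restrict (Set.Ioc (0:ℝ) 1)).prod (volume.restrict (Set.Ioc (0:ℝ) (2*Real.pi)))) := by
    rw [Measure.prod_restrict]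
    apply (hKcont.integrableOn_compact (isCompact_Icc.prod isCompact_Icc)).mono_set
    exact Set.prod_mono Set.Ioc_subset_Icc_self Set.Ioc_subset_Icc_self
  have hswap := MeasureTheory.integral_integral_swap hKint
  -- inner FTC
  have hinner : ∀ θ : ℝ, (∫ t in Set.Ioc (0:ℝ) 1, K t θ)
      = (circleMap 0 ρ θ * Complex.I) *
        (-(Complex.log (1 - z / circleMap 0 ρ θ)) * g (circleMap 0 ρ θ)) := by
    intro θ
    have e1 : ∀ t : ℝ, K t θ = ((circleMap 0 ρ θ * Complex.I) * g (circleMap 0 ρ θ)) *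
        (z / (circleMap 0 ρ θ - (t:ℂ)*z)) := by
      intro t; simp only [hK]; ring
    simp only [e1]
    rw [MeasureTheory.integral_const_mul, ← intervalIntegral.integral_of_le zero_le_one]
    have hw₀abs : ‖z / circleMap 0 ρ θ‖ < 1 := by
      rw [norm_div, habs_c, div_lt_one hρ0]; exact hz
    have h1tw : ∀ t ∈ Set.Icc (0:ℝ) 1, (1:ℂ) - (t:ℂ) * (z / circleMap 0 ρ θ) ≠ 0 ∧
        0 < ((1:ℂ) - (t:ℂ) * (z / circleMap 0 ρ θ)).re := by
      intro t ht
      have habs2 : ‖(t:ℂ) * (z / circleMap 0 ρ θ)‖ < 1 := by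
        rw [norm_mul, Complex.norm_real, Real.norm_eq_abs, _root_.abs_of_nonneg ht.1]
        nlinarith [norm_nonneg (z / circleMap 0 ρ θ), ht.2]
      have hrele := Complex.re_le_norm ((t:ℂ) * (z / circleMap 0 ρ θ))
      constructor
      · intro hzero
        rw [sub_eq_zero] at hzero
        rw [← hzero] at habs2
        simp at habs2
      · simp only [Complex.sub_re, Complex.one_re]
        linarith
    have hd : ∀ t ∈ Set.uIcc (0:ℝ) 1, HasDerivAt
        (fun s : ℝ => -Complex.log (1 - (s:ℂ) * (z / circleMap 0 ρ θ)))
        (z / (circleMap 0 ρ θ - (t:ℂ)*z)) t := by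
      intro t ht
      rw [Set.uIcc_of_le zero_le_one] at ht
      have hslit : (1:ℂ) - (t:ℂ) * (z / circleMap 0 ρ θ) ∈ Complex.slitPlane :=
        Complex.mem_slitPlane_iff.2 (Or.inl (h1tw t ht).2)
      have h1 : HasDerivAt (fun u : ℂ => 1 - u * (z / circleMap 0 ρ θ))
          (-(z / circleMap 0 ρ θ)) (t:ℂ) := by
        simpa using ((hasDerivAt_id ((t:ℂ))).mul_const (z / circleMap 0 ρ θ)).const_sub 1
      have h2 : HasDerivAt Complex.log ((1:ℂ) - (t:ℂ) * (z / circleMap 0 ρ θ))⁻¹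
          ((1:ℂ) - (t:ℂ) * (z / circleMap 0 ρ θ)) := Complex.hasDerivAt_log hslit
      have h3 := ((h2.comp ((t:ℂ)) h1).neg).comp_ofReal
      convert h3 using 1
      · rfl
      have hne1 := (h1tw t ht).1
      have hne2 := hsub0 θ t ht
      have hne3 := hc0 θ
      have e : (1:ℂ) - (t:ℂ) * (z / circleMap 0 ρ θ) = (circleMap 0 ρ θ - t*z) / circleMap 0 ρ θ := by
        field_simp
      rw [mul_neg, neg_neg, e, inv_div, div_mul_div_comm, mul_comm (circleMap 0 ρ θ) z,
        mul_div_mul_right _ _ hne3]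
    have hcont2 : ContinuousOn (fun t : ℝ => z / (circleMap 0 ρ θ - (t:ℂ)*z))
        (Set.uIcc (0:ℝ) 1) := by
      apply ContinuousOn.div continuousOn_const
      · exact continuousOn_const.sub ((Complex.continuous_ofReal.mul continuous_const).continuousOn)
      · intro t ht
        rw [Set.uIcc_of_le zero_le_one] at ht
        exact hsub0 θ t ht
    rw [intervalIntegral.integral_eq_sub_of_hasDerivAt hd hcont2.intervalIntegrable]
    push_cast
    simp only [one_mul, zero_mul, sub_zero, Complex.log_one, neg_zero, sub_zero]
    ring
  calc ∫ t in Set.Ioc (0:ℝ) 1, (z * g ((t:ℂ)*z))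
      = ∫ t in Set.Ioc (0:ℝ) 1, ((2*Real.pi*Complex.I : ℂ)⁻¹ *
          ∫ θ in Set.Ioc (0:ℝ) (2*Real.pi), K t θ) :=
        setIntegral_congr_fun measurableSet_Ioc (fun t ht => hstepA t ht)
  _ = (2*Real.pi*Complex.I : ℂ)⁻¹ * ∫ t in Set.Ioc (0:ℝ) 1,
        ∫ θ in Set.Ioc (0:ℝ) (2*Real.pi), K t θ := by
        rw [MeasureTheory.integral_const_mul]
  _ = (2*Real.pi*Complex.I : ℂ)⁻¹ * ∫ θ in Set.Ioc (0:ℝ) (2*Real.pi),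
        ∫ t in Set.Ioc (0:ℝ) 1, K t θ := by rw [hswap]
  _ = _ := by rw [setIntegral_congr_fun measurableSet_Ioc (fun θ _ => hinner θ)]


lemma correction_zero {g : ℂ → ℂ} (hg : DifferentiableOn ℂ g (ball (0:ℂ) 1)) {z : ℂ} {ρ : ℝ}
    (hz : ‖z‖ < ρ) (hρ1 : ρ < 1) :
    ∫ θ in Set.Ioc (0:ℝ) (2*Real.pi), ((circleMap 0 ρ θ * Complex.I) *
      (Complex.log (1 - (starRingEnd ℂ) z * circleMap 0 ρ θ / ((ρ:ℂ))^2) *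
        g (circleMap 0 ρ θ))) = 0 := by
  have hρ0 : 0 < ρ := lt_of_le_of_lt (norm_nonneg z) hz
  have hdall : ∀ ζ ∈ closedBall (0:ℂ) ρ, DifferentiableAt ℂ
      (fun ζ => Complex.log (1 - (starRingEnd ℂ) z * ζ / ((ρ:ℂ))^2) * g ζ) ζ := by
    intro ζ hζ
    have hζball : ζ ∈ ball (0:ℂ) 1 := closedBall_subset_ball hρ1 hζ
    have hζρ : ‖ζ‖ ≤ ρ := by
      rw [mem_closedBall_zero_iff] at hζ
      exact hζ
    have habsx : ‖(starRingEnd ℂ) z * ζ / ((ρ:ℂ))^2‖ < 1 := by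
      rw [norm_div, norm_mul, Complex.norm_conj, norm_pow, Complex.norm_real, Real.norm_eq_abs,
        _root_.abs_of_pos hρ0, div_lt_one (by positivity)]
      nlinarith [norm_nonneg z, norm_nonneg ζ, hz, hζρ]
    have hslit : (1:ℂ) - (starRingEnd ℂ) z * ζ / ((ρ:ℂ))^2 ∈ Complex.slitPlane := by
      apply Complex.mem_slitPlane_iff.2 (Or.inl ?_)
      have hre := Complex.re_le_norm ((starRingEnd ℂ) z * ζ / ((ρ:ℂ))^2)
      simp only [Complex.sub_re, Complex.one_re]
      linarith
    have hinner : DifferentiableAt ℂ (fun u : ℂ => (1:ℂ) - (starRingEnd ℂ) z * u / ((ρ:ℂ))^2) ζ :=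
      ((differentiableAt_id.const_mul _).div_const _).const_sub 1
    exact (hinner.clog hslit).mul (hg.differentiableAt (isOpen_ball.mem_nhds hζball))
  have h0 := circleIntegral_eq_zero_of_differentiable_on_off_countable hρ0.le
      Set.countable_empty (fun ζ hζ => (hdall ζ hζ).continuousAt.continuousWithinAt)
      (fun ζ hζ => hdall ζ (ball_subset_closedBall hζ.1))
  rw [circleIntegral] at h0
  rw [← intervalIntegral.integral_of_le two_pi_pos.le]
  calc ∫ θ in (0:ℝ)..(2*Real.pi), ((circleMap 0 ρ θ * Complex.I) *
        (Complex.log (1 - (starRingEnd ℂ) z * circleMap 0 ρ θ / ((ρ:ℂ))^2) *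
          g (circleMap 0 ρ θ)))
      = ∫ θ in (0:ℝ)..(2*Real.pi), deriv (circleMap 0 ρ) θ •
          (Complex.log (1 - (starRingEnd ℂ) z * circleMap 0 ρ θ / ((ρ:ℂ))^2) *
            g (circleMap 0 ρ θ)) := by
        apply intervalIntegral.integral_congr
        intro θ _
        simp only [deriv_circleMap, smul_eq_mul]
  _ = 0 := h0

lemma sup_le_step {p : ℝ} (hp : 1 ≤ p) {f : ℂ → ℂ} (hf : DifferentiableOn ℂ f (ball (0:ℂ) 1))
    {z : ℂ} (hz : z ∈ ball (0:ℂ) 1) :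
    ENNReal.ofReal (‖f z‖) ≤ ENNReal.ofReal (‖f 0‖)
      + ENNReal.ofReal Real.pi * hardyNorm p (deriv f) := by
  have hgd : DifferentiableOn ℂ (deriv f) (ball (0:ℂ) 1) := deriv_diffOn hf
  have hz' := hz
  rw [mem_ball_zero_iff] at hz'
  set ρ : ℝ := (‖z‖ + 1)/2 with hρdef
  have hzρ : ‖z‖ < ρ := by rw [hρdef]; linarith
  have hρ1 : ρ < 1 := by rw [hρdef]; linarith
  have hρ0 : 0 < ρ := lt_of_le_of_lt (norm_nonneg z) hzρ
  have habs_c : ∀ θ : ℝ, ‖circleMap 0 ρ θ‖ = ρ := by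
    intro θ; rw [norm_circleMap_zero, _root_.abs_of_pos hρ0]
  have hc0 : ∀ θ : ℝ, circleMap 0 ρ θ ≠ 0 := by
    intro θ h
    have h2 := habs_c θ
    rw [h, norm_zero] at h2
    exact hρ0.ne h2
  have hcball : ∀ θ : ℝ, circleMap 0 ρ θ ∈ ball (0:ℂ) 1 := by
    intro θ; rw [mem_ball_zero_iff, habs_c θ]; exact hρ1
  -- continuity in θ of the pieces
  have hgccont : Continuous (fun θ : ℝ => deriv f (circleMap 0 ρ θ)) :=
    hgd.continuousOn.comp_continuous (continuous_circleMap 0 ρ) hcball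
  have hker1 : Continuous (fun θ : ℝ => Complex.log (1 - z / circleMap 0 ρ θ)) := by
    rw [continuous_iff_continuousAt]; intro θ
    apply ContinuousAt.clog
    · exact (continuousAt_const.sub
        (continuousAt_const.div (continuous_circleMap 0 ρ).continuousAt (hc0 θ)))
    · apply Complex.mem_slitPlane_iff.2 (Or.inl ?_)
      have habsw : ‖z / circleMap 0 ρ θ‖ < 1 := by
        rw [norm_div, habs_c, div_lt_one hρ0]; exact hzρ
      have hre := Complex.re_le_norm (z / circleMap 0 ρ θ)
      simp only [Complex.sub_re, Complex.one_re]
      linarith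
  have hker2 : Continuous (fun θ : ℝ =>
      Complex.log (1 - (starRingEnd ℂ) z * circleMap 0 ρ θ / ((ρ:ℂ))^2)) := by
    rw [continuous_iff_continuousAt]; intro θ
    apply ContinuousAt.clog
    · exact (continuousAt_const.sub
        (((continuous_circleMap 0 ρ).continuousAt.const_mul _).div_const _))
    · apply Complex.mem_slitPlane_iff.2 (Or.inl ?_)
      have habsw : ‖(starRingEnd ℂ) z * circleMap 0 ρ θ / ((ρ:ℂ))^2‖ < 1 := by
        rw [norm_div, norm_mul, Complex.norm_conj, habs_c, norm_pow, Complex.norm_real, Real.norm_eq_abs,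
          _root_.abs_of_pos hρ0, div_lt_one (by positivity)]
        nlinarith [norm_nonneg z, hzρ, hρ0]
      have hre := Complex.re_le_norm ((starRingEnd ℂ) z * circleMap 0 ρ θ / ((ρ:ℂ))^2)
      simp only [Complex.sub_re, Complex.one_re]
      linarith
  -- integrable pieces
  have hint1 : IntegrableOn (fun θ : ℝ => (circleMap 0 ρ θ * Complex.I) *
      (-(Complex.log (1 - z / circleMap 0 ρ θ)) * deriv f (circleMap 0 ρ θ)))
      (Set.Ioc (0:ℝ) (2*Real.pi)) := by
    apply Continuous.integrableOn_Ioc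
    exact ((continuous_circleMap 0 ρ).mul continuous_const).mul (hker1.neg.mul hgccont)
  have hint2 : IntegrableOn (fun θ : ℝ => (circleMap 0 ρ θ * Complex.I) *
      (Complex.log (1 - (starRingEnd ℂ) z * circleMap 0 ρ θ / ((ρ:ℂ))^2)
        * deriv f (circleMap 0 ρ θ)))
      (Set.Ioc (0:ℝ) (2*Real.pi)) := by
    apply Continuous.integrableOn_Ioc
    exact ((continuous_circleMap 0 ρ).mul continuous_const).mul (hker2.mul hgccont)
  -- representation of f z - f 0
  have hf0 : f z - f 0 = (2*Real.pi*Complex.I : ℂ)⁻¹ *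
      ∫ θ in Set.Ioc (0:ℝ) (2*Real.pi), ((circleMap 0 ρ θ * Complex.I) *
        ((-(Complex.log (1 - z / circleMap 0 ρ θ)) +
          Complex.log (1 - (starRingEnd ℂ) z * circleMap 0 ρ θ / ((ρ:ℂ))^2)) *
            deriv f (circleMap 0 ρ θ))) := by
    have e1 : f z - f 0 = ∫ t in Set.Ioc (0:ℝ) 1, (z * deriv f ((t:ℂ)*z)) := by
      rw [ftc_seg hf hz, intervalIntegral.integral_of_le zero_le_one]
      ring
    rw [e1, repr_integral hgd hzρ hρ1]
    congr 1
    calc ∫ θ in Set.Ioc (0:ℝ) (2*Real.pi), ((circleMap 0 ρ θ * Complex.I) *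
          (-(Complex.log (1 - z / circleMap 0 ρ θ)) * deriv f (circleMap 0 ρ θ)))
        = (∫ θ in Set.Ioc (0:ℝ) (2*Real.pi), ((circleMap 0 ρ θ * Complex.I) *
            (-(Complex.log (1 - z / circleMap 0 ρ θ)) * deriv f (circleMap 0 ρ θ)))) + 0 :=
          (add_zero _).symm
    _ = (∫ θ in Set.Ioc (0:ℝ) (2*Real.pi), ((circleMap 0 ρ θ * Complex.I) *
          (-(Complex.log (1 - z / circleMap 0 ρ θ)) * deriv f (circleMap 0 ρ θ)))) +
        (∫ θ in Set.Ioc (0:ℝ) (2*Real.pi), ((circleMap 0 ρ θ * Complex.I) *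
          (Complex.log (1 - (starRingEnd ℂ) z * circleMap 0 ρ θ / ((ρ:ℂ))^2) *
            deriv f (circleMap 0 ρ θ)))) := by
        rw [correction_zero hgd hzρ hρ1]
    _ = ∫ θ in Set.Ioc (0:ℝ) (2*Real.pi), (((circleMap 0 ρ θ * Complex.I) *
          (-(Complex.log (1 - z / circleMap 0 ρ θ)) * deriv f (circleMap 0 ρ θ))) +
          ((circleMap 0 ρ θ * Complex.I) *
          (Complex.log (1 - (starRingEnd ℂ) z * circleMap 0 ρ θ / ((ρ:ℂ))^2) *
            deriv f (circleMap 0 ρ θ)))) := (MeasureTheory.integral_add hint1 hint2).symm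
    _ = _ := by
        apply setIntegral_congr_fun measurableSet_Ioc
        intro θ _
        ring
  -- norm estimate
  set S := ∫ θ in Set.Ioc (0:ℝ) (2*Real.pi), ‖deriv f (circleMap 0 ρ θ)‖ with hS
  have hS0 : 0 ≤ S :=
    setIntegral_nonneg measurableSet_Ioc (fun θ _ => norm_nonneg _)
  have hbound : ‖f z - f 0‖ ≤ (1/2) * S := by
    rw [hf0, norm_mul]
    have habsinv : ‖(2*Real.pi*Complex.I : ℂ)⁻¹‖ = (2*Real.pi)⁻¹ := by
      rw [norm_inv, norm_mul, norm_mul, Complex.norm_I, Complex.norm_real, Real.norm_eq_abs, Complex.norm_two,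
        _root_.abs_of_pos Real.pi_pos, mul_one]
    rw [habsinv]
    have h1 : ‖∫ θ in Set.Ioc (0:ℝ) (2*Real.pi), ((circleMap 0 ρ θ * Complex.I) *
        ((-(Complex.log (1 - z / circleMap 0 ρ θ)) +
          Complex.log (1 - (starRingEnd ℂ) z * circleMap 0 ρ θ / ((ρ:ℂ))^2)) *
            deriv f (circleMap 0 ρ θ)))‖
        ≤ ∫ θ in Set.Ioc (0:ℝ) (2*Real.pi),
            (ρ * Real.pi) * ‖deriv f (circleMap 0 ρ θ)‖ := by
      refine le_trans (MeasureTheory.norm_integral_le_integral_norm _) ?_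
      apply setIntegral_mono_on ?_ ?_ measurableSet_Ioc
      · intro θ _
        rw [norm_mul, norm_mul, norm_mul, Complex.norm_I, habs_c, mul_one]
        have hkb := kernel_bound (z := z) (ζ := circleMap 0 ρ θ) (by rw [habs_c]; exact hzρ)
          (habs_c θ)
        calc ρ * (‖-(Complex.log (1 - z / circleMap 0 ρ θ)) +
              Complex.log (1 - (starRingEnd ℂ) z * circleMap 0 ρ θ / ((ρ:ℂ))^2)‖ *
                ‖deriv f (circleMap 0 ρ θ)‖)
            ≤ ρ * (Real.pi * ‖deriv f (circleMap 0 ρ θ)‖) := by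
              exact mul_le_mul_of_nonneg_left (mul_le_mul_of_nonneg_right hkb
                (norm_nonneg _)) hρ0.le
        _ = (ρ * Real.pi) * ‖deriv f (circleMap 0 ρ θ)‖ := by ring
      · apply Integrable.norm
        apply Continuous.integrableOn_Ioc
        exact ((continuous_circleMap 0 ρ).mul continuous_const).mul
          ((hker1.neg.add hker2).mul hgccont)
      · apply Integrable.const_mul
        apply Continuous.integrableOn_Ioc
        exact continuous_norm.comp hgccont
    rw [MeasureTheory.integral_const_mul] at h1
    have h2 : (2*Real.pi)⁻¹ * ((ρ * Real.pi) * S) = (ρ/2) * S := by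
      field_simp
    calc (2*Real.pi)⁻¹ * ‖∫ θ in Set.Ioc (0:ℝ) (2*Real.pi),
          ((circleMap 0 ρ θ * Complex.I) *
          ((-(Complex.log (1 - z / circleMap 0 ρ θ)) +
            Complex.log (1 - (starRingEnd ℂ) z * circleMap 0 ρ θ / ((ρ:ℂ))^2)) *
              deriv f (circleMap 0 ρ θ)))‖
        ≤ (2*Real.pi)⁻¹ * ((ρ * Real.pi) * S) := by
          apply mul_le_mul_of_nonneg_left h1 (by positivity)
    _ = (ρ/2) * S := h2
    _ ≤ (1/2) * S := by nlinarith [hS0, hρ1]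
  -- final ENNReal chain
  have htri : ‖f z‖ ≤ ‖f 0‖ + ‖f z - f 0‖ := by
    calc ‖f z‖ = ‖f 0 + (f z - f 0)‖ := by ring_nf
    _ ≤ _ := norm_add_le _ _
  calc ENNReal.ofReal (‖f z‖)
      ≤ ENNReal.ofReal (‖f 0‖ + (1/2)*S) := by
        apply ENNReal.ofReal_le_ofReal
        linarith [hbound, htri]
  _ = ENNReal.ofReal (‖f 0‖) + ENNReal.ofReal ((1/2)*S) :=
        ENNReal.ofReal_add (norm_nonneg _) (by positivity)
  _ ≤ ENNReal.ofReal (‖f 0‖) + ENNReal.ofReal Real.pi * hardyNorm p (deriv f) := by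
        gcongr
        have e2 : (1/2)*S = Real.pi * (S / (2*Real.pi)) := by
          field_simp
        rw [e2, ENNReal.ofReal_mul Real.pi_pos.le]
        gcongr
        have e4 : S = ∫ θ in Set.Ioc (0:ℝ) (2*Real.pi),
            ‖deriv f ((ρ:ℂ) * Complex.exp ((θ:ℂ)*Complex.I))‖ := by
          rw [hS]
          apply setIntegral_congr_fun measurableSet_Ioc
          intro θ _
          simp [circleMap]
        rw [e4]
        exact meanOne_le_hardy hgd hp ⟨hρ0, hρ1⟩

lemma snNorm_succ_mono {p : ℝ} (hp : 1 ≤ p) :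
    ∀ (m : ℕ) (f : ℂ → ℂ), DifferentiableOn ℂ f (ball (0:ℂ) 1) →
      snNorm m p f ≤ snNorm (m+1) p f := by
  intro m
  induction m with
  | zero =>
      intro f hf
      simpa [snNorm] using hardy_le_step hp hf
  | succ m ih =>
      intro f hf
      have h1 := ih (deriv f) (deriv_diffOn hf)
      simp only [snNorm]
      exact add_le_add_right h1 _


end NormChainAux

theorem norm_chain (n : ℕ) (p : ℝ) (hn : 1 ≤ n) (hp : 1 ≤ p) (f : ℂ → ℂ)
    (hf : MemS n p f) :
    supNorm f ≤ ENNReal.ofReal Real.pi * snNorm 1 p f ∧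
    (∀ k, 1 ≤ k → k ≤ n →
      ENNReal.ofReal Real.pi ^ (k-1) * snNorm (k-1) p f ≤
        ENNReal.ofReal Real.pi ^ k * snNorm k p f) ∧
    snNorm (n-1) p f ≤ ENNReal.ofReal Real.pi * snNorm n p f := by
  obtain ⟨hdiff, -⟩ := hf
  have hπ1 : (1:ENNReal) ≤ ENNReal.ofReal Real.pi := by
    rw [← ENNReal.ofReal_one]
    exact ENNReal.ofReal_le_ofReal (by linarith [Real.pi_gt_three])
  have hmono : ∀ m : ℕ, snNorm m p f ≤ snNorm (m+1) p f :=
    fun m => NormChainAux.snNorm_succ_mono hp m f hdiff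
  have hmul : ∀ m : ℕ, snNorm m p f ≤ ENNReal.ofReal Real.pi * snNorm (m+1) p f := by
    intro m
    calc snNorm m p f ≤ snNorm (m+1) p f := hmono m
    _ = 1 * snNorm (m+1) p f := (one_mul _).symm
    _ ≤ ENNReal.ofReal Real.pi * snNorm (m+1) p f := mul_le_mul_left hπ1 _
  refine ⟨?_, ?_, ?_⟩
  · unfold supNorm
    apply iSup₂_le
    intro z hz
    refine le_trans (NormChainAux.sup_le_step hp hdiff hz) ?_
    have h2 : snNorm 1 p f = ENNReal.ofReal (‖f 0‖) + hardyNorm p (deriv f) := by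
      simp [snNorm]
    rw [h2, mul_add]
    gcongr
    calc ENNReal.ofReal (‖f 0‖)
        = 1 * ENNReal.ofReal (‖f 0‖) := (one_mul _).symm
    _ ≤ _ := mul_le_mul_left hπ1 _
  · intro k hk1 hkn
    obtain ⟨j, rfl⟩ : ∃ j, k = j + 1 := ⟨k - 1, (Nat.succ_pred_eq_of_pos hk1).symm⟩
    simp only [Nat.add_sub_cancel]
    calc ENNReal.ofReal Real.pi ^ j * snNorm j p f
        ≤ ENNReal.ofReal Real.pi ^ j * (ENNReal.ofReal Real.pi * snNorm (j+1) p f) :=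
          mul_le_mul_right (hmul j) _
    _ = ENNReal.ofReal Real.pi ^ (j+1) * snNorm (j+1) p f := by
        rw [← mul_assoc, pow_succ]
  · obtain ⟨m, rfl⟩ : ∃ m, n = m + 1 := ⟨n - 1, (Nat.succ_pred_eq_of_pos hn).symm⟩
    simpa [Nat.add_sub_cancel] using hmul m
end

section
/- For every n ≥ 1 and 1 ≤ p < ∞, one has the chain of inclusions S_n^p ⊂ S_{n-1}^p ⊂ ⋯ ⊂ S_1^p ⊂ H^∞, where H^∞ is the space of bounded analytic functions on the unit disk. -/
open MeasureTheory Metric Set Filter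

lemma abs_gamma (r φ : ℝ) (hr : 0 ≤ r) : ‖(r:ℂ) * Complex.exp (φ * Complex.I)‖ = r := by
  rw [norm_mul, Complex.norm_exp]
  simp [Complex.norm_real, _root_.abs_of_nonneg hr]

lemma gamma_mem (r φ : ℝ) (hr : 0 ≤ r) (hr1 : r < 1) :
    ((r:ℂ) * Complex.exp (φ * Complex.I)) ∈ Metric.ball (0:ℂ) 1 := by
  rw [Metric.mem_ball, dist_zero_right, abs_gamma r φ hr]
  exact hr1

lemma gamma_hasDeriv (g : ℂ → ℂ) (hg : DifferentiableOn ℂ g (Metric.ball 0 1))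
    (r : ℝ) (hr : 0 < r) (hr1 : r < 1) (φ : ℝ) :
    HasDerivAt (fun ψ : ℝ => g ((r:ℝ) * Complex.exp (ψ * Complex.I)))
      (deriv g ((r:ℝ) * Complex.exp (φ * Complex.I)) * (((r:ℝ) * Complex.exp (φ * Complex.I)) * Complex.I)) φ := by
  have hmem := gamma_mem r φ hr.le hr1
  have hγ : HasDerivAt (fun ψ : ℝ => (r:ℂ) * Complex.exp (ψ * Complex.I))
      (((r:ℝ) * Complex.exp (φ * Complex.I)) * Complex.I) φ := by
    have := hasDerivAt_circleMap 0 r φ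
    simp only [circleMap, zero_add] at this
    convert this using 2 <;> simp [circleMap, mul_comm]
  have hgd : DifferentiableAt ℂ g ((r:ℂ) * Complex.exp (φ * Complex.I)) :=
    hg.differentiableAt (isOpen_ball.mem_nhds hmem)
  exact (hgd.hasDerivAt.comp φ hγ)

lemma cont_deriv_comp (g : ℂ → ℂ) (hg : DifferentiableOn ℂ g (Metric.ball 0 1))
    (r : ℝ) (hr : 0 ≤ r) (hr1 : r < 1) :
    Continuous (fun φ : ℝ => deriv g ((r:ℝ) * Complex.exp (φ * Complex.I))) := by
  have hd : AnalyticOnNhd ℂ (deriv g) (Metric.ball 0 1) :=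
    (hg.analyticOnNhd isOpen_ball).deriv
  have hγ : Continuous (fun φ : ℝ => (r:ℂ) * Complex.exp (φ * Complex.I)) := by
    continuity
  have : ContinuousOn (fun φ : ℝ => deriv g ((r:ℝ) * Complex.exp (φ * Complex.I))) Set.univ :=
    hd.continuousOn.comp hγ.continuousOn (fun φ _ => gamma_mem r φ hr hr1)
  exact continuousOn_univ.mp this

lemma variation_bound (g : ℂ → ℂ) (hg : DifferentiableOn ℂ g (Metric.ball 0 1))
    (r : ℝ) (hr : 0 < r) (hr1 : r < 1) (θ : ℝ) (hθ : θ ∈ Set.Icc 0 (2*Real.pi)) :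
    ‖g ((r:ℝ) * Complex.exp (θ * Complex.I)) - g ((r:ℝ) * Complex.exp ((0:ℝ) * Complex.I))‖
      ≤ ∫ φ in (0:ℝ)..(2*Real.pi), ‖deriv g ((r:ℝ) * Complex.exp (φ * Complex.I))‖ := by
  set γ := fun φ : ℝ => (r:ℂ) * Complex.exp (φ * Complex.I) with hγdef
  have hcont := cont_deriv_comp g hg r hr.le hr1
  have hcont' : Continuous (fun φ : ℝ => deriv g (γ φ) * (γ φ * Complex.I)) := by
    apply hcont.mul
    exact ((continuous_const.mul ((Complex.continuous_ofReal.mul continuous_const).cexp)).mul continuous_const)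
  have hftc : (∫ φ in (0:ℝ)..θ, deriv g (γ φ) * (γ φ * Complex.I))
      = g (γ θ) - g (γ 0) := by
    apply intervalIntegral.integral_eq_sub_of_hasDerivAt
    · intro x _; exact gamma_hasDeriv g hg r hr hr1 x
    · exact hcont'.intervalIntegrable _ _
  rw [← hftc]
  calc ‖∫ φ in (0:ℝ)..θ, deriv g (γ φ) * (γ φ * Complex.I)‖
      ≤ ∫ φ in (0:ℝ)..θ, ‖deriv g (γ φ) * (γ φ * Complex.I)‖ :=
        by
          exact intervalIntegral.norm_integral_le_integral_norm hθ.1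
    _ ≤ ∫ φ in (0:ℝ)..θ, ‖deriv g (γ φ)‖ := by
        apply intervalIntegral.integral_mono_on hθ.1
          (hcont'.norm.intervalIntegrable _ _) (hcont.norm.intervalIntegrable _ _)
        intro x _
        rw [norm_mul, norm_mul]
        simp only [abs_gamma r x hr.le, Complex.norm_I, mul_one]
        exact mul_le_of_le_one_right (norm_nonneg _) ((abs_gamma r x hr.le).le.trans hr1.le)
    _ ≤ ∫ φ in (0:ℝ)..(2*Real.pi), ‖deriv g (γ φ)‖ := by
        apply intervalIntegral.integral_mono_interval le_rfl hθ.1 hθ.2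
        · filter_upwards with x using norm_nonneg _
        · exact (hcont.norm.intervalIntegrable _ _)

lemma cont_comp_gamma (h : ℂ → ℂ) (hc : ContinuousOn h (Metric.ball 0 1))
    (r : ℝ) (hr : 0 ≤ r) (hr1 : r < 1) :
    Continuous (fun φ : ℝ => h ((r:ℝ) * Complex.exp (φ * Complex.I))) := by
  have hγ : Continuous (fun φ : ℝ => (r:ℂ) * Complex.exp (φ * Complex.I)) := by continuity
  have : ContinuousOn (fun φ : ℝ => h ((r:ℝ) * Complex.exp (φ * Complex.I))) Set.univ :=
    hc.comp hγ.continuousOn (fun φ _ => gamma_mem r φ hr hr1)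
  exact continuousOn_univ.mp this

lemma mean_value (g : ℂ → ℂ) (r : ℝ) (hr : 0 < r) (hr1 : r < 1)
    (hg : DifferentiableOn ℂ g (Metric.ball 0 1)) :
    ∫ θ in (0:ℝ)..(2*Real.pi), g ((r:ℝ) * Complex.exp (θ * Complex.I))
      = (2*Real.pi) • g 0 := by
  have hsub : closedBall (0:ℂ) r ⊆ ball 0 1 := closedBall_subset_ball (by simpa using hr1)
  have h := (hg.mono hsub).circleIntegral_sub_inv_smul (w := 0) (mem_ball_self hr)
  rw [circleIntegral] at h
  simp only [circleMap, deriv_circleMap, zero_add, sub_zero, smul_eq_mul] at h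
  have hne : ∀ θ : ℝ, (r:ℂ) * Complex.exp (θ * Complex.I) ≠ 0 := by
    intro θ
    exact mul_ne_zero (by exact_mod_cast hr.ne') (Complex.exp_ne_zero _)
  have h2 : ∀ θ : ℝ, circleMap 0 r θ * Complex.I * ((circleMap 0 r θ)⁻¹ * g (circleMap 0 r θ))
      = Complex.I * g ((r:ℝ) * Complex.exp (θ * Complex.I)) := by
    intro θ
    have : circleMap 0 r θ = (r:ℝ) * Complex.exp (θ * Complex.I) := by
      simp [circleMap, mul_comm]
    rw [this]
    field_simp [hne θ]
    have hr0 : (r:ℂ) ≠ 0 := by exact_mod_cast hr.ne'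
    exact mul_div_cancel_left₀ _ hr0
  rw [intervalIntegral.integral_congr (fun θ _ => by
    simpa [circleMap] using h2 θ)] at h
  rw [intervalIntegral.integral_const_mul] at h
  have := congrArg (fun w => Complex.I⁻¹ * w) h
  rw [← mul_assoc, inv_mul_cancel₀ Complex.I_ne_zero, one_mul] at this
  rw [this]
  simp [smul_eq_mul]
  ring_nf
  rw [Complex.I_sq]
  ring

lemma pointwise_bound (g : ℂ → ℂ) (hg : DifferentiableOn ℂ g (Metric.ball 0 1))
    (z : ℂ) (hz0 : z ≠ 0) (hz : z ∈ Metric.ball (0:ℂ) 1) :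
    ‖g z‖ ≤ ‖g 0‖ +
      2 * ∫ φ in (0:ℝ)..(2*Real.pi),
        ‖deriv g ((‖z‖ : ℝ) * Complex.exp (φ * Complex.I))‖ := by
  set r : ℝ := ‖z‖ with hrdef
  have hr : 0 < r := norm_pos_iff.mpr hz0
  have hr1 : r < 1 := by simpa using mem_ball_zero_iff.mp hz
  set γ := fun φ : ℝ => (r:ℂ) * Complex.exp (φ * Complex.I) with hγdef
  set V : ℝ := ∫ φ in (0:ℝ)..(2*Real.pi), ‖deriv g (γ φ)‖ with hVdef
  -- canonical angle
  set a : ℝ := Complex.arg z with hadef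
  set θ : ℝ := if a < 0 then a + 2*Real.pi else a with hθdef
  have hθmem : θ ∈ Set.Icc 0 (2*Real.pi) := by
    have h1 := Complex.neg_pi_lt_arg z
    have h2 := Complex.arg_le_pi z
    have hπ := Real.pi_pos
    rw [hθdef]
    split_ifs with hcase <;> constructor <;> [skip; skip; skip; skip] <;> nlinarith
  have hγθ : γ θ = z := by
    rw [hγdef]
    by_cases hcase : a < 0
    · have : θ = a + 2*Real.pi := by rw [hθdef, if_pos hcase]
      rw [this]
      push_cast
      rw [add_mul, Complex.exp_add]
      have h2pi : Complex.exp ((2*Real.pi : ℝ) * Complex.I) = 1 := by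
        simpa using Complex.exp_two_pi_mul_I
      push_cast at h2pi
      rw [h2pi, mul_one]
      exact Complex.norm_mul_exp_arg_mul_I z
    · have : θ = a := by rw [hθdef, if_neg hcase]
      rw [this]
      exact Complex.norm_mul_exp_arg_mul_I z
  have hvar := fun (φ : ℝ) (hφ : φ ∈ Set.Icc 0 (2*Real.pi)) =>
    variation_bound g hg r hr hr1 φ hφ
  -- |g z - g (γ 0)| ≤ V
  have h1 : ‖g z - g (γ 0)‖ ≤ V := by
    rw [← hγθ]; exact hvar θ hθmem
  -- |g (γ 0) - g 0| ≤ V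
  have hmean := mean_value g r hr hr1 hg
  have hcg : Continuous (fun φ : ℝ => g (γ φ)) :=
    cont_comp_gamma g hg.continuousOn r hr.le hr1
  have h2 : ‖g (γ 0) - g 0‖ ≤ V := by
    have hint : (∫ φ in (0:ℝ)..(2*Real.pi), (g (γ 0) - g (γ φ)))
        = (2*Real.pi) • (g (γ 0) - g 0) := by
      rw [intervalIntegral.integral_sub (intervalIntegrable_const) (hcg.intervalIntegrable _ _)]
      rw [hmean]
      simp [smul_sub]
    have hb : ‖∫ φ in (0:ℝ)..(2*Real.pi), (g (γ 0) - g (γ φ))‖ ≤ V * |2*Real.pi - 0| := by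
      apply intervalIntegral.norm_integral_le_of_norm_le_const
      intro x hx
      rw [Set.uIoc_of_le (by positivity)] at hx
      have hxI : x ∈ Set.Icc 0 (2*Real.pi) := ⟨hx.1.le, hx.2⟩
      have := hvar x hxI
      rw [show g (γ 0) - g (γ x) = -(g (γ x) - g (γ 0)) by ring, norm_neg]
      exact this
    rw [hint] at hb
    have hπ := Real.two_pi_pos
    rw [norm_smul] at hb
    simp only [Real.norm_eq_abs, abs_of_pos hπ, sub_zero, abs_of_pos hπ] at hb
    calc ‖g (γ 0) - g 0‖ = ‖g (γ 0) - g 0‖ := rfl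
      _ ≤ V := by
        nlinarith [norm_nonneg (g (γ 0) - g 0), hb]
  calc ‖g z‖ ≤ ‖g 0‖ + ‖g z - g 0‖ := by
        have := norm_add_le (g 0) (g z - g 0)
        simpa [add_sub_cancel] using this
    _ ≤ ‖g 0‖ + (‖g z - g (γ 0)‖ + ‖g (γ 0) - g 0‖) := by
        have := norm_sub_le_norm_sub_add_norm_sub (g z) (g (γ 0)) (g 0)
        linarith
    _ ≤ ‖g 0‖ + 2 * V := by linarith
lemma real_le_rpow_add_one {x p : ℝ} (hx : 0 ≤ x) (hp : 1 ≤ p) : x ≤ x ^ p + 1 := by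
  rcases le_total x 1 with h | h
  · have : (0:ℝ) ≤ x ^ p := Real.rpow_nonneg hx p
    linarith
  · have h1 : x ^ (1:ℝ) ≤ x ^ p := Real.rpow_le_rpow_of_exponent_le h hp
    rw [Real.rpow_one] at h1
    linarith

lemma hardy_term_bound (p : ℝ) (hp : 1 ≤ p) (h : ℂ → ℂ) (r : ℝ) (hr : r ∈ Set.Ioo (0:ℝ) 1) :
    (∫⁻ θ in Set.Ioc (0:ℝ) (2*Real.pi),
        ENNReal.ofReal (‖h ((r:ℝ) * Complex.exp (θ * Complex.I))‖ ^ p))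
      ≤ (hardyNorm p h) ^ p * ENNReal.ofReal (2*Real.pi) := by
  set d : ENNReal := ENNReal.ofReal (2*Real.pi) with hd
  have hd0 : d ≠ 0 := by
    rw [hd]
    simp [ENNReal.ofReal_eq_zero]
    positivity
  have hdt : d ≠ ⊤ := ENNReal.ofReal_ne_top
  set I : ENNReal := ∫⁻ θ in Set.Ioc (0:ℝ) (2*Real.pi),
      ENNReal.ofReal (‖h ((r:ℝ) * Complex.exp (θ * Complex.I))‖ ^ p) with hI
  have hterm : (I / d) ^ (1/p) ≤ hardyNorm p h := by
    rw [hardyNorm]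
    exact le_iSup (fun r : Set.Ioo (0:ℝ) 1 =>
      ((∫⁻ θ in Set.Ioc (0:ℝ) (2*Real.pi),
        ENNReal.ofReal (‖h ((r:ℝ) * Complex.exp (θ * Complex.I))‖ ^ p)) / d) ^ (1/p))
      ⟨r, hr⟩
  have hppos : (0:ℝ) < p := lt_of_lt_of_le one_pos hp
  have h2 : I / d ≤ (hardyNorm p h) ^ p := by
    have := ENNReal.rpow_le_rpow hterm hppos.le
    rwa [← ENNReal.rpow_mul, one_div, inv_mul_cancel₀ hppos.ne', ENNReal.rpow_one] at this
  calc I = I / d * d := (ENNReal.div_mul_cancel hd0 hdt).symm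
    _ ≤ (hardyNorm p h) ^ p * d := mul_le_mul_left h2 d

lemma key_lemma (p : ℝ) (hp : 1 ≤ p) (g : ℂ → ℂ)
    (hg : DifferentiableOn ℂ g (Metric.ball 0 1))
    (hC : hardyNorm p (deriv g) < ⊤) : supNorm g < ⊤ := by
  set C : ENNReal := hardyNorm p (deriv g) with hCdef
  set d : ENNReal := ENNReal.ofReal (2*Real.pi) with hd
  set B : ENNReal := ENNReal.ofReal (‖g 0‖) + 2 * (C ^ p * d + d) with hB
  have hppos : (0:ℝ) < p := lt_of_lt_of_le one_pos hp
  have hBlt : B < ⊤ := by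
    rw [hB]
    refine ENNReal.add_lt_top.mpr ⟨ENNReal.ofReal_lt_top, ?_⟩
    refine ENNReal.mul_lt_top (by norm_num) ?_
    refine ENNReal.add_lt_top.mpr ⟨?_, ENNReal.ofReal_lt_top⟩
    exact ENNReal.mul_lt_top (ENNReal.rpow_lt_top_of_nonneg hppos.le hC.ne) ENNReal.ofReal_lt_top
  refine lt_of_le_of_lt ?_ hBlt
  rw [supNorm]
  refine iSup₂_le ?_
  intro z hz
  by_cases hz0 : z = 0
  · rw [hz0, hB]; exact le_self_add
  -- main case
  set r : ℝ := ‖z‖ with hrdef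
  have hr : 0 < r := norm_pos_iff.mpr hz0
  have hr1 : r < 1 := by simpa using mem_ball_zero_iff.mp hz
  set V : ℝ := ∫ φ in (0:ℝ)..(2*Real.pi),
      ‖deriv g ((r:ℝ) * Complex.exp (φ * Complex.I))‖ with hV
  have hpb := pointwise_bound g hg z hz0 hz
  have hVnonneg : 0 ≤ V := by
    rw [hV]
    apply intervalIntegral.integral_nonneg Real.two_pi_pos.le
    intro x _; exact norm_nonneg _
  -- ofReal V ≤ C^p * d + d
  have hcont : Continuous (fun φ : ℝ => ‖deriv g ((r:ℝ) * Complex.exp (φ * Complex.I))‖) :=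
    (cont_deriv_comp g hg r hr.le hr1).norm
  have hVeq : ENNReal.ofReal V = ∫⁻ φ in Set.Ioc (0:ℝ) (2*Real.pi),
      ENNReal.ofReal (‖deriv g ((r:ℝ) * Complex.exp (φ * Complex.I))‖) := by
    rw [hV, intervalIntegral.integral_of_le Real.two_pi_pos.le]
    exact ofReal_integral_eq_lintegral_ofReal
      (hcont.integrableOn_Ioc)
      (Filter.Eventually.of_forall (fun x => norm_nonneg _))
  have hVle : ENNReal.ofReal V ≤ C ^ p * d + d := by
    rw [hVeq]
    calc (∫⁻ φ in Set.Ioc (0:ℝ) (2*Real.pi),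
          ENNReal.ofReal (‖deriv g ((r:ℝ) * Complex.exp (φ * Complex.I))‖))
        ≤ ∫⁻ φ in Set.Ioc (0:ℝ) (2*Real.pi),
          (ENNReal.ofReal (‖deriv g ((r:ℝ) * Complex.exp (φ * Complex.I))‖ ^ p) + 1) := by
          apply lintegral_mono
          intro φ
          have hx := real_le_rpow_add_one (norm_nonneg
            (deriv g ((r:ℝ) * Complex.exp (φ * Complex.I)))) hp
          calc ENNReal.ofReal (‖deriv g ((r:ℝ) * Complex.exp (φ * Complex.I))‖)
              ≤ ENNReal.ofReal (‖deriv g ((r:ℝ) * Complex.exp (φ * Complex.I))‖ ^ p + 1) :=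
                ENNReal.ofReal_le_ofReal hx
            _ = _ := by
                rw [ENNReal.ofReal_add (Real.rpow_nonneg (norm_nonneg _) p) zero_le_one,
                  ENNReal.ofReal_one]
      _ = (∫⁻ φ in Set.Ioc (0:ℝ) (2*Real.pi),
          ENNReal.ofReal (‖deriv g ((r:ℝ) * Complex.exp (φ * Complex.I))‖ ^ p))
          + 1 * volume (Set.Ioc (0:ℝ) (2*Real.pi)) := by
          rw [lintegral_add_right _ measurable_const, lintegral_const,
            Measure.restrict_apply_univ]
      _ ≤ C ^ p * d + d := by
          apply add_le_add
          · exact hardy_term_bound p hp (deriv g) r ⟨hr, hr1⟩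
          · rw [one_mul, Real.volume_Ioc, hd, sub_zero]
  calc ENNReal.ofReal (‖g z‖)
      ≤ ENNReal.ofReal (‖g 0‖ + 2 * V) := ENNReal.ofReal_le_ofReal hpb
    _ ≤ ENNReal.ofReal (‖g 0‖) + ENNReal.ofReal (2 * V) := ENNReal.ofReal_add_le
    _ ≤ ENNReal.ofReal (‖g 0‖) + 2 * ENNReal.ofReal V := by
        rw [ENNReal.ofReal_mul (by norm_num : (0:ℝ) ≤ 2)]
        simp
    _ ≤ B := by
        rw [hB]
        exact add_le_add le_rfl (mul_le_mul_right hVle 2)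

lemma hardy_of_sup (p : ℝ) (hp : 1 ≤ p) (g : ℂ → ℂ)
    (hM : supNorm g < ⊤) : hardyNorm p g < ⊤ := by
  set M : ENNReal := supNorm g with hMdef
  have hppos : (0:ℝ) < p := lt_of_lt_of_le one_pos hp
  set d : ENNReal := ENNReal.ofReal (2*Real.pi) with hd
  have hbound : hardyNorm p g ≤ (M ^ p) ^ (1/p) := by
    rw [hardyNorm]
    refine iSup_le ?_
    rintro ⟨r, hr⟩
    refine ENNReal.rpow_le_rpow ?_ (by positivity)
    refine ENNReal.div_le_of_le_mul ?_
    calc (∫⁻ θ in Set.Ioc (0:ℝ) (2*Real.pi),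
          ENNReal.ofReal (‖g ((r:ℝ) * Complex.exp (θ * Complex.I))‖ ^ p))
        ≤ ∫⁻ _ in Set.Ioc (0:ℝ) (2*Real.pi), M ^ p := by
          apply lintegral_mono
          intro θ
          simp only
          rw [← ENNReal.ofReal_rpow_of_nonneg (norm_nonneg _) hppos.le]
          refine ENNReal.rpow_le_rpow ?_ hppos.le
          rw [hMdef, supNorm]
          exact le_iSup₂ (f := fun z (_ : z ∈ Metric.ball (0:ℂ) 1) =>
            ENNReal.ofReal (‖g z‖)) _ (gamma_mem r θ hr.1.le hr.2)
      _ = M ^ p * d := by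
          rw [lintegral_const, Measure.restrict_apply_univ, Real.volume_Ioc, sub_zero, hd]
  refine lt_of_le_of_lt hbound ?_
  refine ENNReal.rpow_lt_top_of_nonneg (by positivity) ?_
  exact (ENNReal.rpow_lt_top_of_nonneg hppos.le hM.ne).ne

lemma diffOn_iteratedDeriv (f : ℂ → ℂ) (hf : DifferentiableOn ℂ f (Metric.ball 0 1)) (m : ℕ) :
    DifferentiableOn ℂ (iteratedDeriv m f) (Metric.ball 0 1) := by
  have : AnalyticOnNhd ℂ (iteratedDeriv m f) (Metric.ball 0 1) := by
    induction m with
    | zero => simpa [iteratedDeriv_zero] using hf.analyticOnNhd isOpen_ball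
    | succ k ih => rw [iteratedDeriv_succ]; exact ih.deriv
  exact this.differentiableOn

lemma step_down (p : ℝ) (hp : 1 ≤ p) (m : ℕ) (f : ℂ → ℂ)
    (hf : DifferentiableOn ℂ f (Metric.ball 0 1))
    (h : hardyNorm p (iteratedDeriv (m+1) f) < ⊤) :
    hardyNorm p (iteratedDeriv m f) < ⊤ := by
  have hg : DifferentiableOn ℂ (iteratedDeriv m f) (Metric.ball 0 1) :=
    diffOn_iteratedDeriv f hf m
  have hder : deriv (iteratedDeriv m f) = iteratedDeriv (m+1) f := (iteratedDeriv_succ).symm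
  have hsup : supNorm (iteratedDeriv m f) < ⊤ := by
    apply key_lemma p hp _ hg
    rw [hder]; exact h
  exact hardy_of_sup p hp _ hsup


theorem inclusion_chain (n : ℕ) (p : ℝ) (hn : 1 ≤ n) (hp : 1 ≤ p) :
    (∀ j k : ℕ, j ≤ k → k ≤ n → ∀ f : ℂ → ℂ, MemS k p f → MemS j p f) ∧
    (∀ f : ℂ → ℂ, MemS 1 p f → supNorm f < ⊤) := by
  constructor
  · intro j k hjk hkn f hf
    obtain ⟨d, rfl⟩ := Nat.exists_eq_add_of_le hjk
    clear hjk
    induction d with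
    | zero => simpa using hf
    | succ e ih =>
      apply ih (by omega)
      obtain ⟨hdiff, hh⟩ := hf
      exact ⟨hdiff, step_down p hp (j+e) f hdiff (by rwa [show j+(e+1) = (j+e)+1 from rfl] at hh)⟩
  · intro f hf
    obtain ⟨hdiff, hh⟩ := hf
    apply key_lemma p hp f hdiff
    rwa [iteratedDeriv_one] at hh
end

section
/- For n ≥ 1 and 1 ≤ p < ∞, one has S_{n,0}^p = z^n · S_n^p, i.e., f ∈ S_{n,0}^p if and only if f(z) = z^n g(z) for some g ∈ S_n^p. -/
open MeasureTheory Metric Set Filter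

noncomputable def Complex.abs : AbsoluteValue ℂ ℝ :=
  IsAbsoluteValue.toAbsoluteValue (‖·‖ : ℂ → ℝ)

theorem Complex.norm_eq_abs (z : ℂ) : ‖z‖ = Complex.abs z := rfl

theorem Complex.abs_natCast (n : ℕ) : Complex.abs n = n := by
  rw [← Complex.norm_eq_abs]; simp

theorem Complex.abs_ofReal (x : ℝ) : Complex.abs x = |x| := by
  rw [← Complex.norm_eq_abs]; simp

theorem Complex.abs_exp_ofReal_mul_I (x : ℝ) : Complex.abs (Complex.exp (x * Complex.I)) = 1 := by
  rw [← Complex.norm_eq_abs]; exact Complex.norm_exp_ofReal_mul_I x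

theorem Complex.continuous_abs : Continuous Complex.abs := continuous_norm



open scoped ENNReal NNReal


lemma iterAnalytic {F : ℂ → ℂ} (h : DifferentiableOn ℂ F (Metric.ball 0 1)) (k : ℕ) :
    AnalyticOnNhd ℂ (iteratedDeriv k F) (Metric.ball (0:ℂ) 1) := by
  induction k with
  | zero => simpa using h.analyticOnNhd isOpen_ball
  | succ k ih => rw [iteratedDeriv_succ]; exact ih.deriv

lemma iterDiffAt {F : ℂ → ℂ} (h : DifferentiableOn ℂ F (Metric.ball 0 1)) (k : ℕ)
    {z : ℂ} (hz : z ∈ Metric.ball (0:ℂ) 1) : DifferentiableAt ℂ (iteratedDeriv k F) z :=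
  (iterAnalytic h k z hz).differentiableAt

lemma iterCont {F : ℂ → ℂ} (h : DifferentiableOn ℂ F (Metric.ball 0 1)) (k : ℕ) :
    ContinuousOn (iteratedDeriv k F) (Metric.ball (0:ℂ) 1) := fun z hz =>
  (iterAnalytic h k z hz).continuousAt.continuousWithinAt

lemma iterCongr {F G : ℂ → ℂ} (h : Set.EqOn F G (Metric.ball (0:ℂ) 1)) (k : ℕ) :
    Set.EqOn (iteratedDeriv k F) (iteratedDeriv k G) (Metric.ball (0:ℂ) 1) := by
  induction k with
  | zero => simpa using h
  | succ k ih =>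
    intro z hz
    rw [iteratedDeriv_succ, iteratedDeriv_succ]
    exact Filter.EventuallyEq.deriv_eq (Filter.eventuallyEq_of_mem (isOpen_ball.mem_nhds hz) ih)

lemma iterIter {F : ℂ → ℂ} (j k : ℕ) :
    iteratedDeriv j (iteratedDeriv k F) = iteratedDeriv (j + k) F := by
  induction j with
  | zero => simp
  | succ j ih =>
    have e : j + 1 + k = (j + k) + 1 := by omega
    rw [e, iteratedDeriv_succ, ih, ← iteratedDeriv_succ]

lemma iterPow (N m : ℕ) :
    iteratedDeriv m (fun z : ℂ => z ^ N) = fun z => (N.descFactorial m : ℂ) * z ^ (N - m) := by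
  induction m with
  | zero => simp
  | succ m ih =>
    rw [iteratedDeriv_succ, ih]
    funext z
    rw [deriv_const_mul _ (differentiableAt_pow _), deriv_pow_field]
    rw [Nat.descFactorial_succ, Nat.sub_sub]
    push_cast
    ring

lemma leib {g : ℂ → ℂ} (hg : DifferentiableOn ℂ g (Metric.ball 0 1)) (N : ℕ) :
    ∀ m, m ≤ N → ∀ z ∈ Metric.ball (0:ℂ) 1,
      iteratedDeriv m (fun w => w ^ N * g w) z
        = ∑ k ∈ Finset.range (m+1), (m.choose k : ℂ) *
            ((N.descFactorial (m-k) : ℂ) * z ^ (N - (m-k)) * iteratedDeriv k g z) := by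
  intro m
  induction m with
  | zero => intro _ z _; simp
  | succ m ih =>
    intro hm z hz
    have hm' : m ≤ N := by omega
    rw [iteratedDeriv_succ]
    have hEq : ∀ w ∈ Metric.ball (0:ℂ) 1, iteratedDeriv m (fun w => w ^ N * g w) w
        = ∑ k ∈ Finset.range (m+1), (m.choose k : ℂ) *
            ((N.descFactorial (m-k) : ℂ) * w ^ (N - (m-k)) * iteratedDeriv k g w) :=
      fun w hw => ih hm' w hw
    rw [Filter.EventuallyEq.deriv_eq (Filter.eventuallyEq_of_mem (isOpen_ball.mem_nhds hz) hEq)]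
    rw [deriv_fun_sum (fun k _ =>
      ((((differentiableAt_pow _).const_mul _).fun_mul (iterDiffAt hg k hz)).const_mul _))]
    have step : ∀ k ∈ Finset.range (m+1),
        deriv (fun w : ℂ => (m.choose k : ℂ) *
            ((N.descFactorial (m-k) : ℂ) * w ^ (N - (m-k)) * iteratedDeriv k g w)) z
        = (m.choose k : ℂ) * ((N.descFactorial (m+1-k) : ℂ) * z ^ (N - (m+1-k)) * iteratedDeriv k g z)
          + (m.choose k : ℂ) * ((N.descFactorial (m-k) : ℂ) * z ^ (N - (m-k)) * iteratedDeriv (k+1) g z) := by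
      intro k hk
      have hkm : k ≤ m := by simpa [Nat.lt_succ_iff] using hk
      rw [deriv_const_mul _ (((differentiableAt_pow _).const_mul _).fun_mul (iterDiffAt hg k hz))]
      rw [deriv_fun_mul ((differentiableAt_pow _).const_mul _) (iterDiffAt hg k hz)]
      rw [deriv_const_mul _ (differentiableAt_pow _), deriv_pow_field, ← iteratedDeriv_succ]
      have e1 : m + 1 - k = (m - k) + 1 := by omega
      have e2 : N - (m - k + 1) = N - (m - k) - 1 := by omega
      rw [e1, Nat.descFactorial_succ, e2]
      push_cast
      ring
    rw [Finset.sum_congr rfl step, Finset.sum_add_distrib]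
    have key := Finset.sum_choose_succ_mul
      (fun i j => (N.descFactorial j : ℂ) * z ^ (N - j) * iteratedDeriv i g z) m
    simpa [mul_assoc] using key.symm

noncomputable def dIter (f : ℂ → ℂ) : ℕ → (ℂ → ℂ)
  | 0 => f
  | k+1 => dslope (dIter f k) 0

lemma dslope_diffOn {u : ℂ → ℂ} (hu : DifferentiableOn ℂ u (Metric.ball 0 1)) :
    DifferentiableOn ℂ (dslope u 0) (Metric.ball (0:ℂ) 1) := by
  intro z hz
  rcases eq_or_ne z 0 with rfl | hne
  · obtain ⟨q, hq⟩ := hu.analyticAt (isOpen_ball.mem_nhds hz)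
    have ha : AnalyticAt ℂ (dslope u 0) 0 := ⟨_, hq.has_fpower_series_dslope_fslope⟩
    exact ha.differentiableAt.differentiableWithinAt
  · exact ((differentiableAt_dslope_of_ne hne).2
      ((hu z hz).differentiableAt (isOpen_ball.mem_nhds hz))).differentiableWithinAt

lemma dIterDiff {f : ℂ → ℂ} (hf : DifferentiableOn ℂ f (Metric.ball 0 1)) (k : ℕ) :
    DifferentiableOn ℂ (dIter f k) (Metric.ball (0:ℂ) 1) := by
  induction k with
  | zero => exact hf
  | succ k ih => exact dslope_diffOn ih

lemma dIter_step (f : ℂ → ℂ) (k : ℕ) (z : ℂ) :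
    z * dIter f (k+1) z = dIter f k z - dIter f k 0 := by
  have := sub_smul_dslope (dIter f k) 0 z
  simpa [smul_eq_mul, dIter] using this

lemma vanish {f : ℂ → ℂ} (hf : DifferentiableOn ℂ f (Metric.ball 0 1))
    {n : ℕ} (h0 : ∀ m < n, iteratedDeriv m f 0 = 0) :
    ∀ k, k ≤ n → ∀ z : ℂ, f z = z ^ k * dIter f k z := by
  intro k
  induction k with
  | zero => intro _ z; simp [dIter]
  | succ k ih =>
    intro hk z
    have h0ball : (0:ℂ) ∈ Metric.ball (0:ℂ) 1 := mem_ball_self one_pos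
    have hz0 : dIter f k 0 = 0 := by
      have hfk : Set.EqOn f (fun w => w ^ k * dIter f k w) (Metric.ball 0 1) :=
        fun w _ => ih (by omega) w
      have h1 := iterCongr hfk k h0ball
      rw [leib (dIterDiff hf k) k k le_rfl 0 h0ball] at h1
      rw [Finset.sum_eq_single_of_mem 0 (Finset.mem_range.2 (by omega))
        (fun j hj hj0 => by
          have hjk : j ≤ k := by simpa [Nat.lt_succ_iff] using hj
          have e : k - (k - j) = j := by omega
          rw [e, zero_pow hj0]; ring)] at h1
      simp only [Nat.choose_zero_right, Nat.sub_zero, Nat.descFactorial_self, Nat.cast_one,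
        one_mul, Nat.sub_self, pow_zero, mul_one, iteratedDeriv_zero] at h1
      have := h0 k (by omega)
      rw [this] at h1
      have hfac : ((k.factorial : ℂ)) ≠ 0 := by
        exact_mod_cast Nat.cast_ne_zero.2 k.factorial_ne_zero
      exact (mul_eq_zero.1 h1.symm).resolve_left hfac
    calc f z = z ^ k * dIter f k z := ih (by omega) z
    _ = z ^ k * (z * dIter f (k+1) z + dIter f k 0) := by rw [dIter_step]; ring_nf
    _ = z ^ (k+1) * dIter f (k+1) z := by rw [hz0]; ring

lemma memtz {z : ℂ} (hz : z ∈ Metric.ball (0:ℂ) 1) {t : ℝ} (ht : t ∈ Set.uIcc (0:ℝ) 1) :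
    (t:ℂ) * z ∈ Metric.ball (0:ℂ) 1 := by
  rw [Set.uIcc_of_le (by norm_num)] at ht
  rw [mem_ball_zero_iff] at hz ⊢
  calc ‖(t:ℂ) * z‖ = |t| * ‖z‖ := by simp [Complex.norm_real, abs_of_nonneg]
  _ ≤ 1 * ‖z‖ := by
      apply mul_le_mul_of_nonneg_right _ (norm_nonneg z)
      rw [abs_le]; constructor <;> [linarith [ht.1]; exact ht.2]
  _ < 1 := by simpa using hz

lemma hderiv {h : ℂ → ℂ} (hd : DifferentiableOn ℂ h (Metric.ball 0 1)) (j : ℕ)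
    {z : ℂ} (hz : z ∈ Metric.ball (0:ℂ) 1) {t : ℝ} (ht : t ∈ Set.uIcc (0:ℝ) 1) :
    HasDerivAt (fun s : ℝ => iteratedDeriv j h ((s:ℂ) * z))
      (z * iteratedDeriv (j+1) h ((t:ℂ) * z)) t := by
  have hmem := memtz hz ht
  have h1 : HasDerivAt (iteratedDeriv j h) (iteratedDeriv (j+1) h ((t:ℂ)*z)) ((t:ℂ)*z) := by
    have := (iterDiffAt hd j hmem).hasDerivAt
    rwa [← iteratedDeriv_succ] at this
  have h2 : HasDerivAt (fun s : ℝ => (s:ℂ) * z) z t := by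
    simpa using (Complex.ofRealCLM.hasDerivAt (x := t)).mul_const z
  have := HasDerivAt.scomp t h1 h2
  simpa [Function.comp_def, smul_eq_mul, mul_comm] using this

lemma contAux {h : ℂ → ℂ} (hd : DifferentiableOn ℂ h (Metric.ball 0 1)) (j : ℕ)
    {z : ℂ} (hz : z ∈ Metric.ball (0:ℂ) 1) :
    ContinuousOn (fun s : ℝ => iteratedDeriv j h ((s:ℂ) * z)) (Set.uIcc (0:ℝ) 1) :=
  (iterCont hd j).comp (Continuous.continuousOn (by continuity)) (fun t ht => memtz hz ht)

lemma tay {h : ℂ → ℂ} (hd : DifferentiableOn ℂ h (Metric.ball 0 1)) :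
    ∀ k : ℕ, 1 ≤ k → ∀ z ∈ Metric.ball (0:ℂ) 1,
      h z = (∑ m ∈ Finset.range k, iteratedDeriv m h 0 / m.factorial * z ^ m)
        + z ^ k / (k-1).factorial *
          ∫ t in (0:ℝ)..1, iteratedDeriv k h ((t:ℂ) * z) * (1 - (t:ℂ)) ^ (k-1) := by
  intro k
  induction k with
  | zero => omega
  | succ k ih =>
    intro _ z hz
    rcases Nat.eq_zero_or_pos k with rfl | hk
    · -- base case k+1 = 1
      have hcont : ContinuousOn (fun t : ℝ => z * iteratedDeriv (0+1) h ((t:ℂ)*z))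
          (Set.uIcc (0:ℝ) 1) := continuousOn_const.mul (contAux hd 1 hz)
      have hFTC := intervalIntegral.integral_eq_sub_of_hasDerivAt
        (fun t ht => hderiv hd 0 hz ht) hcont.intervalIntegrable
      simp only [iteratedDeriv_zero, Complex.ofReal_one, Complex.ofReal_zero, one_mul,
        zero_mul] at hFTC
      rw [intervalIntegral.integral_const_mul] at hFTC
      simp only [Nat.add_sub_cancel, pow_zero, mul_one, Nat.factorial_zero, Nat.cast_one]
      rw [Finset.sum_range_one]
      simp only [pow_zero, mul_one, Nat.factorial_zero, Nat.cast_one, div_one, iteratedDeriv_zero,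
        pow_one]
      rw [show z ^ (0+1) = z from by ring, hFTC]
      ring
    · have hk0 : ((k:ℂ)) ≠ 0 := Nat.cast_ne_zero.2 (by omega)
      have hu := fun (t:ℝ) (ht : t ∈ Set.uIcc (0:ℝ) 1) => hderiv hd k hz ht
      have hv : ∀ t ∈ Set.uIcc (0:ℝ) 1, HasDerivAt (fun s:ℝ => (1-(s:ℂ))^k / (-(k:ℂ)))
          ((1-(t:ℂ))^(k-1)) t := by
        intro t ht
        have h1 : HasDerivAt (fun s:ℝ => (1:ℂ) - (s:ℂ)) (-1) t := by
          simpa using ((Complex.ofRealCLM.hasDerivAt (x := t))).const_sub (1:ℂ)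
        have h2 := (HasDerivAt.scomp t (hasDerivAt_pow k ((1:ℂ)-(t:ℂ))) h1).div_const (-(k:ℂ))
        convert h2 using 1
        · rfl
        · rfl
        · rw [smul_eq_mul, neg_one_mul, neg_div_neg_eq, mul_div_cancel_left₀ _ hk0]
      have hu' : IntervalIntegrable (fun t:ℝ => z * iteratedDeriv (k+1) h ((t:ℂ)*z)) volume 0 1 :=
        (continuousOn_const.mul (contAux hd (k+1) hz)).intervalIntegrable
      have hvc : Continuous (fun t:ℝ => (1-(t:ℂ))^(k-1)) := by continuity
      have hv' : IntervalIntegrable (fun t:ℝ => (1-(t:ℂ))^(k-1)) volume 0 1 :=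
        hvc.intervalIntegrable 0 1
      have hIBP := intervalIntegral.integral_mul_deriv_eq_deriv_mul hu hv hu' hv'
      have hcg : Set.EqOn
          (fun t:ℝ => (z * iteratedDeriv (k+1) h ((t:ℂ)*z)) * ((1-(t:ℂ))^k / (-(k:ℂ))))
          (fun t:ℝ => (z / (-(k:ℂ))) * (iteratedDeriv (k+1) h ((t:ℂ)*z) * (1-(t:ℂ))^k))
          (Set.uIcc (0:ℝ) 1) := fun t _ => by ring
      rw [intervalIntegral.integral_congr hcg, intervalIntegral.integral_const_mul] at hIBP
      simp only [Complex.ofReal_one, Complex.ofReal_zero, sub_self, zero_pow (by omega : k ≠ 0),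
        zero_div, mul_zero, zero_mul, sub_zero, one_pow, mul_zero, zero_sub, mul_one,
        Nat.add_sub_cancel] at hIBP ⊢
      have hIBP' : (∫ t in (0:ℝ)..1, iteratedDeriv k h ((t:ℂ)*z) * (1-(t:ℂ))^(k-1))
          = iteratedDeriv k h 0 / (k:ℂ)
            + z/(k:ℂ) * ∫ t in (0:ℝ)..1, iteratedDeriv (k+1) h ((t:ℂ)*z) * (1-(t:ℂ))^k := by
        rw [hIBP]; field_simp
        ring
      have hIH := ih hk z hz
      rw [hIBP'] at hIH
      rw [Finset.sum_range_succ, hIH]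
      have kfac : ((k.factorial : ℂ)) = (k:ℂ) * ((k-1).factorial : ℂ) := by
        exact_mod_cast (Nat.mul_factorial_pred hk.ne').symm
      have f0 : (((k-1).factorial : ℂ)) ≠ 0 := Nat.cast_ne_zero.2 (k-1).factorial_ne_zero
      field_simp [kfac]
      rw [kfac]
      ring

lemma add3_rpow_le {x y w : ℝ≥0∞} {q : ℝ} (hq : 1 ≤ q) :
    (x + y + w) ^ q ≤ 3^q * (x^q + y^q + w^q) := by
  have hq0 : (0:ℝ) ≤ q := le_trans zero_le_one hq
  have h1 : x + y + w ≤ 3 * (x ⊔ y ⊔ w) := by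
    have hx : x ≤ x ⊔ y ⊔ w := le_sup_of_le_left le_sup_left
    have hy : y ≤ x ⊔ y ⊔ w := le_sup_of_le_left le_sup_right
    have hw : w ≤ x ⊔ y ⊔ w := le_sup_right
    calc x + y + w ≤ (x ⊔ y ⊔ w) + (x ⊔ y ⊔ w) + (x ⊔ y ⊔ w) := by gcongr
    _ = 3 * (x ⊔ y ⊔ w) := by ring
  calc (x + y + w)^q ≤ (3 * (x ⊔ y ⊔ w))^q := ENNReal.rpow_le_rpow h1 hq0
  _ = 3^q * (x ⊔ y ⊔ w)^q := ENNReal.mul_rpow_of_nonneg _ _ hq0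
  _ ≤ 3^q * (x^q + y^q + w^q) := by
      gcongr
      have hsup : (x ⊔ y ⊔ w) = x ∨ (x ⊔ y ⊔ w) = y ∨ (x ⊔ y ⊔ w) = w := by
        rcases le_total x y with h | h
        · rcases le_total y w with h2 | h2
          · right; right; rw [sup_eq_right.2 h, sup_eq_right.2 h2]
          · right; left; rw [sup_eq_right.2 h, sup_eq_left.2 h2]
        · rcases le_total x w with h2 | h2
          · right; right; rw [sup_eq_left.2 h, sup_eq_right.2 h2]
          · left; rw [sup_eq_left.2 h, sup_eq_left.2 h2]
      rcases hsup with he | he | he <;> rw [he]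
      · exact le_add_right (le_add_right le_rfl)
      · exact le_add_right le_add_self
      · exact le_add_self

lemma jensen_pow {q : ℝ} (hq : 1 ≤ q) {φ : ℝ → ℝ≥0∞}
    (hφ : AEMeasurable φ (volume.restrict (Set.Ioc (0:ℝ) 1))) :
    (∫⁻ t in Set.Ioc (0:ℝ) 1, φ t) ^ q ≤ ∫⁻ t in Set.Ioc (0:ℝ) 1, (φ t) ^ q := by
  have hq0 : (0:ℝ) < q := lt_of_lt_of_le zero_lt_one hq
  rcases eq_or_lt_of_le hq with rfl | h1
  · simp
  · have hpq : q.HolderConjugate (q/(q-1)) := Real.HolderConjugate.conjExponent h1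
    have hH := ENNReal.lintegral_mul_le_Lp_mul_Lq (volume.restrict (Set.Ioc (0:ℝ) 1)) hpq hφ
      (aemeasurable_const (b := (1:ℝ≥0∞)))
    simp only [Pi.mul_apply, mul_one, ENNReal.one_rpow, lintegral_const,
      Measure.restrict_apply, MeasurableSet.univ, Set.univ_inter, Real.volume_Ioc, sub_zero,
      ENNReal.ofReal_one, one_mul] at hH
    have h2 := ENNReal.rpow_le_rpow hH (le_of_lt hq0)
    rwa [← ENNReal.rpow_mul, one_div, inv_mul_cancel₀ (ne_of_gt hq0), ENNReal.rpow_one] at h2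

lemma circ_bound {q : ℝ} (hq : 1 ≤ q) (v : ℂ → ℂ) {s : ℝ}
    (hs : s ∈ Set.Ioo (0:ℝ) 1) :
    (∫⁻ θ in Set.Ioc (0:ℝ) (2*Real.pi),
        ENNReal.ofReal (Complex.abs (v ((s:ℂ) * Complex.exp ((θ:ℂ) * Complex.I))) ^ q))
      ≤ ENNReal.ofReal (2*Real.pi) * (hardyNorm q v) ^ q := by
  have hq0 : (0:ℝ) < q := lt_of_lt_of_le zero_lt_one hq
  have h2pi : ENNReal.ofReal (2*Real.pi) ≠ 0 := by
    simp [ENNReal.ofReal_eq_zero]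
    positivity
  have h1 : ((∫⁻ θ in Set.Ioc (0:ℝ) (2*Real.pi),
      ENNReal.ofReal (Complex.abs (v ((s:ℂ) * Complex.exp ((θ:ℂ) * Complex.I))) ^ q)) /
      ENNReal.ofReal (2*Real.pi)) ^ (1/q) ≤ hardyNorm q v := by
    exact le_iSup (fun r : Set.Ioo (0:ℝ) 1 =>
      ((∫⁻ θ in Set.Ioc (0:ℝ) (2*Real.pi),
        ENNReal.ofReal (Complex.abs (v ((r:ℝ) * Complex.exp ((θ:ℂ) * Complex.I))) ^ q)) /
      ENNReal.ofReal (2*Real.pi)) ^ (1/q)) ⟨s, hs⟩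
  have h2 := ENNReal.rpow_le_rpow h1 (le_of_lt hq0)
  rw [← ENNReal.rpow_mul, one_div, inv_mul_cancel₀ (ne_of_gt hq0), ENNReal.rpow_one] at h2
  rw [ENNReal.div_le_iff_le_mul (Or.inl h2pi) (Or.inl ENNReal.ofReal_ne_top)] at h2
  calc _ ≤ hardyNorm q v ^ q * ENNReal.ofReal (2*Real.pi) := h2
  _ = _ := mul_comm _ _

lemma memCirc {r : ℝ} (hr0 : 0 < r) (hr1 : r < 1) (θ : ℝ) :
    (r:ℂ) * Complex.exp ((θ:ℂ) * Complex.I) ∈ Metric.ball (0:ℂ) 1 := by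
  rw [mem_ball_zero_iff]
  rw [Complex.norm_eq_abs, map_mul, Complex.abs_ofReal, Complex.abs_exp_ofReal_mul_I,
    mul_one, abs_of_pos hr0]
  exact hr1

lemma absCirc {r : ℝ} (hr0 : 0 < r) (θ : ℝ) :
    Complex.abs ((r:ℂ) * Complex.exp ((θ:ℂ) * Complex.I)) = r := by
  rw [map_mul, Complex.abs_ofReal, Complex.abs_exp_ofReal_mul_I, mul_one, abs_of_pos hr0]

lemma fub {q : ℝ} (hq : 1 ≤ q) {v : ℂ → ℂ} (hv : ContinuousOn v (Metric.ball (0:ℂ) 1))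
    {r : ℝ} (hr : r ∈ Set.Ioo (0:ℝ) 1) :
    (∫⁻ θ in Set.Ioc (0:ℝ) (2*Real.pi), ∫⁻ t in Set.Ioc (0:ℝ) 1,
        (ENNReal.ofReal (Complex.abs
          (v ((t:ℂ) * ((r:ℂ) * Complex.exp ((θ:ℂ) * Complex.I)))))) ^ q)
      ≤ ENNReal.ofReal (2*Real.pi) * (hardyNorm q v) ^ q := by
  have hq0' : (0:ℝ) ≤ q := le_trans zero_le_one hq
  -- measurability on the product
  set F : ℝ × ℝ → ℝ≥0∞ := fun pp =>
    (ENNReal.ofReal (Complex.abs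
      (v (((pp.2:ℝ):ℂ) * ((r:ℂ) * Complex.exp (((pp.1:ℝ):ℂ) * Complex.I)))))) ^ q with hF
  have hmapsto : Set.MapsTo (fun pp : ℝ × ℝ => ((pp.2:ℝ):ℂ) * ((r:ℂ) * Complex.exp (((pp.1:ℝ):ℂ) * Complex.I)))
      (Set.Ioc (0:ℝ) (2*Real.pi) ×ˢ Set.Ioc (0:ℝ) 1) (Metric.ball (0:ℂ) 1) := by
    rintro ⟨θ, t⟩ ⟨hθ, ht⟩
    rw [mem_ball_zero_iff, Complex.norm_eq_abs, map_mul, Complex.abs_ofReal]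
    rw [absCirc hr.1]
    have h1 : |t| ≤ 1 := by rw [abs_le]; constructor <;> [linarith [ht.1]; exact ht.2]
    calc |t| * r ≤ 1 * r := by apply mul_le_mul_of_nonneg_right h1 (le_of_lt hr.1)
    _ < 1 := by simpa using hr.2
  have hcontF : ContinuousOn F (Set.Ioc (0:ℝ) (2*Real.pi) ×ˢ Set.Ioc (0:ℝ) 1) := by
    apply (ENNReal.continuous_rpow_const).comp_continuousOn
    apply (ENNReal.continuous_ofReal).comp_continuousOn
    apply (Complex.continuous_abs).comp_continuousOn
    exact hv.comp (Continuous.continuousOn (by continuity)) hmapsto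
  have hmeasF : AEMeasurable F
      ((volume.restrict (Set.Ioc (0:ℝ) (2*Real.pi))).prod (volume.restrict (Set.Ioc (0:ℝ) 1))) := by
    have h1 := hcontF.aemeasurable (μ := (volume : Measure (ℝ × ℝ))) (measurableSet_Ioc.prod measurableSet_Ioc)
    rwa [Measure.prod_restrict, ← Measure.volume_eq_prod]
  have hswap := MeasureTheory.lintegral_lintegral_swap (f := fun θ t => F (θ, t)) hmeasF
  calc (∫⁻ θ in Set.Ioc (0:ℝ) (2*Real.pi), ∫⁻ t in Set.Ioc (0:ℝ) 1,
        (ENNReal.ofReal (Complex.abs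
          (v ((t:ℂ) * ((r:ℂ) * Complex.exp ((θ:ℂ) * Complex.I)))))) ^ q)
      = ∫⁻ t in Set.Ioc (0:ℝ) 1, ∫⁻ θ in Set.Ioc (0:ℝ) (2*Real.pi), F (θ, t) := hswap
  _ ≤ ∫⁻ _t in Set.Ioc (0:ℝ) 1, ENNReal.ofReal (2*Real.pi) * (hardyNorm q v) ^ q := by
      apply setLIntegral_mono' measurableSet_Ioc
      intro t ht
      have htr : t * r ∈ Set.Ioo (0:ℝ) 1 := by
        constructor
        · exact mul_pos ht.1 hr.1
        · calc t * r ≤ 1 * r := mul_le_mul_of_nonneg_right ht.2 (le_of_lt hr.1)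
          _ < 1 := by simpa using hr.2
      have hrw : ∀ θ : ℝ, F (θ, t) = ENNReal.ofReal (Complex.abs
          (v (((t*r : ℝ):ℂ) * Complex.exp ((θ:ℂ) * Complex.I))) ^ q) := by
        intro θ
        rw [hF]
        simp only []
        rw [ENNReal.ofReal_rpow_of_nonneg (Complex.abs.nonneg _) hq0']
        congr 3
        push_cast
        ring
      calc (∫⁻ θ in Set.Ioc (0:ℝ) (2*Real.pi), F (θ, t))
          = ∫⁻ θ in Set.Ioc (0:ℝ) (2*Real.pi), ENNReal.ofReal (Complex.abs
            (v (((t*r : ℝ):ℂ) * Complex.exp ((θ:ℂ) * Complex.I))) ^ q) := by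
            exact lintegral_congr (fun θ => hrw θ)
      _ ≤ ENNReal.ofReal (2*Real.pi) * (hardyNorm q v) ^ q := circ_bound hq v htr
  _ = ENNReal.ofReal (2*Real.pi) * (hardyNorm q v) ^ q := by
      rw [setLIntegral_const, Real.volume_Ioc]
      simp

lemma circleCont {v : ℂ → ℂ} (hv : ContinuousOn v (Metric.ball (0:ℂ) 1)) {r : ℝ}
    (hr : r ∈ Set.Ioo (0:ℝ) 1) :
    Continuous (fun θ : ℝ => v ((r:ℂ) * Complex.exp ((θ:ℂ) * Complex.I))) := by
  rw [continuous_iff_continuousAt]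
  intro θ
  exact ContinuousAt.comp
    (hv.continuousAt (isOpen_ball.mem_nhds (memCirc hr.1 hr.2 θ)))
    (Continuous.continuousAt (by continuity))

lemma core {q : ℝ} (hq : 1 ≤ q) {u v : ℂ → ℂ}
    (hu : ContinuousOn u (Metric.ball (0:ℂ) 1)) (hv : ContinuousOn v (Metric.ball (0:ℂ) 1))
    (hfin : hardyNorm q v < ⊤) {a b c : ℝ≥0∞} (ha : a ≠ ⊤) (hb : b ≠ ⊤) (hc : c ≠ ⊤)
    (hbd : ∀ z ∈ Metric.ball (0:ℂ) 1, 1/2 ≤ Complex.abs z →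
      ENNReal.ofReal (Complex.abs (u z)) ≤ a + b * ENNReal.ofReal (Complex.abs (v z))
        + c * ∫⁻ t in Set.Ioc (0:ℝ) 1, ENNReal.ofReal (Complex.abs (v ((t:ℂ) * z)))) :
    hardyNorm q u < ⊤ := by
  have hq0 : (0:ℝ) < q := lt_of_lt_of_le zero_lt_one hq
  have hq0' : (0:ℝ) ≤ q := hq0.le
  have hKq : hardyNorm q v ^ q ≠ ⊤ := ENNReal.rpow_ne_top_of_nonneg hq0' hfin.ne
  obtain ⟨M, hM⟩ := (isCompact_closedBall (0:ℂ) (1/2)).exists_bound_of_continuousOn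
    (hu.mono (Metric.closedBall_subset_ball (by norm_num)))
  set Q : ℝ≥0∞ := (3:ℝ≥0∞)^q * (a^q + b^q * hardyNorm q v ^ q + c^q * hardyNorm q v ^ q)
    with hQdef
  have hQne : Q ≠ ⊤ := by
    apply ENNReal.mul_ne_top (ENNReal.rpow_ne_top_of_nonneg hq0' (by simp))
    apply ENNReal.add_ne_top.2
    refine ⟨ENNReal.add_ne_top.2 ⟨ENNReal.rpow_ne_top_of_nonneg hq0' ha,
      ENNReal.mul_ne_top (ENNReal.rpow_ne_top_of_nonneg hq0' hb) hKq⟩,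
      ENNReal.mul_ne_top (ENNReal.rpow_ne_top_of_nonneg hq0' hc) hKq⟩
  have h2pi0 : ENNReal.ofReal (2*Real.pi) ≠ 0 := by
    simp only [ne_eq, ENNReal.ofReal_eq_zero, not_le]
    positivity
  have hBne : (ENNReal.ofReal ((M ⊔ 0)^q)) ^ (1/q) ⊔ Q ^ (1/q) < ⊤ :=
    sup_lt_iff.2 ⟨ENNReal.rpow_lt_top_of_nonneg (by positivity) ENNReal.ofReal_ne_top,
      ENNReal.rpow_lt_top_of_nonneg (by positivity) hQne⟩
  refine lt_of_le_of_lt ?_ hBne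
  unfold hardyNorm
  refine iSup_le ?_
  rintro ⟨r, hr⟩
  rcases le_or_gt r (1/2) with hsmall | hbig
  · refine le_sup_of_le_left ?_
    refine ENNReal.rpow_le_rpow ?_ (by positivity)
    have hpt : ∀ θ : ℝ,
        ENNReal.ofReal (Complex.abs (u ((r:ℂ) * Complex.exp ((θ:ℂ)*Complex.I))) ^ q)
        ≤ ENNReal.ofReal ((M ⊔ 0)^q) := by
      intro θ
      apply ENNReal.ofReal_le_ofReal
      apply Real.rpow_le_rpow (Complex.abs.nonneg _) _ hq0'
      refine le_trans ?_ le_sup_left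
      have hmem : (r:ℂ) * Complex.exp ((θ:ℂ)*Complex.I) ∈ Metric.closedBall (0:ℂ) (1/2) := by
        rw [mem_closedBall_zero_iff, Complex.norm_eq_abs, absCirc hr.1]
        exact hsmall
      simpa [Complex.norm_eq_abs] using hM _ hmem
    calc (∫⁻ θ in Set.Ioc (0:ℝ) (2*Real.pi),
          ENNReal.ofReal (Complex.abs (u ((r:ℂ) * Complex.exp ((θ:ℂ)*Complex.I))) ^ q)) /
            ENNReal.ofReal (2*Real.pi)
        ≤ (∫⁻ _θ in Set.Ioc (0:ℝ) (2*Real.pi), ENNReal.ofReal ((M ⊔ 0)^q)) /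
            ENNReal.ofReal (2*Real.pi) :=
          ENNReal.div_le_div_right (lintegral_mono hpt) _
    _ = ENNReal.ofReal ((M ⊔ 0)^q) * ENNReal.ofReal (2*Real.pi) / ENNReal.ofReal (2*Real.pi) := by
          rw [setLIntegral_const, Real.volume_Ioc, sub_zero]
    _ ≤ ENNReal.ofReal ((M ⊔ 0)^q) := by
          rw [mul_comm, mul_div_assoc]; exact ENNReal.mul_div_le
  · refine le_sup_of_le_right ?_
    refine ENNReal.rpow_le_rpow ?_ (by positivity)
    rw [ENNReal.div_le_iff_le_mul (Or.inl h2pi0) (Or.inl ENNReal.ofReal_ne_top)]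
    set G2 : ℝ → ℝ≥0∞ := fun θ =>
      (ENNReal.ofReal (Complex.abs (v ((r:ℂ) * Complex.exp ((θ:ℂ)*Complex.I)))))^q with hG2
    set G3 : ℝ → ℝ≥0∞ := fun θ => ∫⁻ t in Set.Ioc (0:ℝ) 1,
      (ENNReal.ofReal (Complex.abs (v ((t:ℂ) * ((r:ℂ) * Complex.exp ((θ:ℂ)*Complex.I))))))^q
      with hG3
    have hG2m : Measurable G2 :=
      ((ENNReal.continuous_rpow_const).comp (ENNReal.continuous_ofReal.comp
        (Complex.continuous_abs.comp (circleCont hv hr)))).measurable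
    have hpt : ∀ θ : ℝ,
        ENNReal.ofReal (Complex.abs (u ((r:ℂ) * Complex.exp ((θ:ℂ)*Complex.I))) ^ q)
        ≤ (3:ℝ≥0∞)^q*a^q + (3:ℝ≥0∞)^q*b^q * G2 θ + (3:ℝ≥0∞)^q*c^q * G3 θ := by
      intro θ
      have hmem := memCirc hr.1 hr.2 θ
      have hb2 := hbd _ hmem (by rw [absCirc hr.1]; linarith)
      rw [← ENNReal.ofReal_rpow_of_nonneg (Complex.abs.nonneg _) hq0']
      have hjen : (∫⁻ t in Set.Ioc (0:ℝ) 1, ENNReal.ofReal (Complex.abs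
          (v ((t:ℂ) * ((r:ℂ) * Complex.exp ((θ:ℂ)*Complex.I)))))) ^ q ≤ G3 θ := by
        apply jensen_pow hq
        apply ContinuousOn.aemeasurable _ measurableSet_Ioc
        apply ENNReal.continuous_ofReal.comp_continuousOn
        apply Complex.continuous_abs.comp_continuousOn
        apply hv.comp (Continuous.continuousOn (by continuity))
        intro t ht
        rw [mem_ball_zero_iff, Complex.norm_eq_abs, map_mul, Complex.abs_ofReal,
          absCirc hr.1]
        have h1 : |t| ≤ 1 := by rw [abs_le]; constructor <;> [linarith [ht.1]; exact ht.2]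
        calc |t| * r ≤ 1 * r := mul_le_mul_of_nonneg_right h1 (le_of_lt hr.1)
        _ < 1 := by simpa using hr.2
      calc (ENNReal.ofReal (Complex.abs (u ((r:ℂ) * Complex.exp ((θ:ℂ)*Complex.I)))))^q
          ≤ (a + b * ENNReal.ofReal (Complex.abs (v ((r:ℂ) * Complex.exp ((θ:ℂ)*Complex.I))))
            + c * ∫⁻ t in Set.Ioc (0:ℝ) 1, ENNReal.ofReal (Complex.abs
              (v ((t:ℂ) * ((r:ℂ) * Complex.exp ((θ:ℂ)*Complex.I))))))^q :=
            ENNReal.rpow_le_rpow hb2 hq0'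
      _ ≤ (3:ℝ≥0∞)^q * ((a)^q
            + (b * ENNReal.ofReal (Complex.abs (v ((r:ℂ) * Complex.exp ((θ:ℂ)*Complex.I)))))^q
            + (c * ∫⁻ t in Set.Ioc (0:ℝ) 1, ENNReal.ofReal (Complex.abs
              (v ((t:ℂ) * ((r:ℂ) * Complex.exp ((θ:ℂ)*Complex.I))))))^q) := add3_rpow_le hq
      _ = (3:ℝ≥0∞)^q*a^q + (3:ℝ≥0∞)^q*b^q * G2 θ + (3:ℝ≥0∞)^q*c^q *
            ((∫⁻ t in Set.Ioc (0:ℝ) 1, ENNReal.ofReal (Complex.abs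
              (v ((t:ℂ) * ((r:ℂ) * Complex.exp ((θ:ℂ)*Complex.I)))))) ^ q) := by
            rw [ENNReal.mul_rpow_of_nonneg b _ hq0', ENNReal.mul_rpow_of_nonneg c _ hq0']
            ring
      _ ≤ _ := by gcongr
    calc (∫⁻ θ in Set.Ioc (0:ℝ) (2*Real.pi),
          ENNReal.ofReal (Complex.abs (u ((r:ℂ) * Complex.exp ((θ:ℂ)*Complex.I))) ^ q))
        ≤ ∫⁻ θ in Set.Ioc (0:ℝ) (2*Real.pi),
            ((3:ℝ≥0∞)^q*a^q + (3:ℝ≥0∞)^q*b^q * G2 θ + (3:ℝ≥0∞)^q*c^q * G3 θ) :=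
          lintegral_mono hpt
    _ = (∫⁻ θ in Set.Ioc (0:ℝ) (2*Real.pi), ((3:ℝ≥0∞)^q*a^q + (3:ℝ≥0∞)^q*b^q * G2 θ))
          + ∫⁻ θ in Set.Ioc (0:ℝ) (2*Real.pi), (3:ℝ≥0∞)^q*c^q * G3 θ :=
        lintegral_add_left' ((aemeasurable_const).add (hG2m.const_mul _).aemeasurable) _
    _ = ((∫⁻ _θ in Set.Ioc (0:ℝ) (2*Real.pi), (3:ℝ≥0∞)^q*a^q)
          + ∫⁻ θ in Set.Ioc (0:ℝ) (2*Real.pi), (3:ℝ≥0∞)^q*b^q * G2 θ)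
          + ∫⁻ θ in Set.Ioc (0:ℝ) (2*Real.pi), (3:ℝ≥0∞)^q*c^q * G3 θ := by
        rw [lintegral_add_left' aemeasurable_const]
    _ ≤ ((3:ℝ≥0∞)^q*a^q * ENNReal.ofReal (2*Real.pi)
          + (3:ℝ≥0∞)^q*b^q * (ENNReal.ofReal (2*Real.pi) * hardyNorm q v ^ q))
          + (3:ℝ≥0∞)^q*c^q * (ENNReal.ofReal (2*Real.pi) * hardyNorm q v ^ q) := by
        gcongr
        · rw [setLIntegral_const, Real.volume_Ioc, sub_zero]
        · rw [lintegral_const_mul' _ _ (ENNReal.mul_ne_top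
            (ENNReal.rpow_ne_top_of_nonneg hq0' (by simp))
            (ENNReal.rpow_ne_top_of_nonneg hq0' hb))]
          gcongr
          have : ∀ θ:ℝ, G2 θ = ENNReal.ofReal (Complex.abs
              (v ((r:ℂ) * Complex.exp ((θ:ℂ)*Complex.I))) ^ q) := fun θ =>
            ENNReal.ofReal_rpow_of_nonneg (Complex.abs.nonneg _) hq0'
          rw [lintegral_congr this]
          exact circ_bound hq v hr
        · rw [lintegral_const_mul' _ _ (ENNReal.mul_ne_top
            (ENNReal.rpow_ne_top_of_nonneg hq0' (by simp))
            (ENNReal.rpow_ne_top_of_nonneg hq0' hc))]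
          gcongr
          exact fub hq hv hr
    _ = Q * ENNReal.ofReal (2*Real.pi) := by rw [hQdef]; ring


lemma si {g : ℂ → ℂ} (hg : DifferentiableOn ℂ g (Metric.ball 0 1)) (n : ℕ) :
    ∀ m, m ≤ n → ∃ C : ℝ, 0 ≤ C ∧ ∀ k ≤ m, ∀ z ∈ Metric.ball (0:ℂ) 1,
      Complex.abs z ^ (n + k) * Complex.abs (iteratedDeriv k g z)
        ≤ C * ∑ j ∈ Finset.range (m+1),
            Complex.abs (iteratedDeriv j (fun w => w ^ n * g w) z) := by
  intro m
  induction m with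
  | zero =>
    intro _
    refine ⟨1, zero_le_one, ?_⟩
    intro k hk z hz
    interval_cases k
    rw [Finset.sum_range_one, one_mul]
    simp only [iteratedDeriv_zero, Nat.add_zero]
    rw [map_mul, map_pow]
  | succ m ih =>
    intro hm1
    obtain ⟨C, hC0, hC⟩ := ih (by omega)
    set F := fun w : ℂ => w ^ n * g w with hF
    set A : ℝ := ∑ k ∈ Finset.range (m+1),
      (((m+1).choose k : ℝ) * (n.descFactorial (m+1-k) : ℝ)) with hA
    have hA0 : 0 ≤ A := Finset.sum_nonneg fun k _ => by positivity
    refine ⟨C + (1 + A * C), by positivity, ?_⟩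
    intro k hk z hz
    have hz1 : Complex.abs z ≤ 1 :=
      le_of_lt (by rwa [mem_ball_zero_iff, Complex.norm_eq_abs] at hz)
    have hS0 : ∀ j, 0 ≤ Complex.abs (iteratedDeriv j F z) := fun j => Complex.abs.nonneg _
    set S : ℝ := ∑ j ∈ Finset.range (m+2), Complex.abs (iteratedDeriv j F z) with hS
    have hSnn : 0 ≤ S := Finset.sum_nonneg fun j _ => hS0 j
    have hSS : (∑ j ∈ Finset.range (m+1), Complex.abs (iteratedDeriv j F z)) ≤ S :=
      Finset.sum_le_sum_of_subset_of_nonneg (Finset.range_subset_range.2 (by omega))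
        (fun j _ _ => hS0 j)
    rcases Nat.lt_or_ge k (m+1) with hkm | hkm
    · -- old cases
      calc Complex.abs z ^ (n + k) * Complex.abs (iteratedDeriv k g z)
          ≤ C * ∑ j ∈ Finset.range (m+1), Complex.abs (iteratedDeriv j F z) :=
            hC k (by omega) z hz
      _ ≤ C * S := mul_le_mul_of_nonneg_left hSS hC0
      _ ≤ (C + (1 + A * C)) * S := by
          nlinarith [mul_nonneg (mul_nonneg hA0 hC0) hSnn]
    · -- k = m+1
      have hk' : k = m + 1 := by omega
      subst hk'
      have hleib := leib hg n (m+1) hm1 z hz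
      -- multiply by z^(m+1) and isolate the top term
      have hmul : z ^ (m+1) * iteratedDeriv (m+1) F z
          = ∑ j ∈ Finset.range (m+2), ((m+1).choose j : ℂ) *
              ((n.descFactorial (m+1-j) : ℂ) * z ^ (n + j) * iteratedDeriv j g z) := by
        rw [hleib, Finset.mul_sum]
        refine Finset.sum_congr rfl fun j hj => ?_
        have hjm : j ≤ m + 1 := by simpa [Nat.lt_succ_iff] using hj
        have he : n + j = (m+1) + (n - (m+1-j)) := by omega
        rw [he, pow_add]
        ring
      have htop : z ^ (n + (m+1)) * iteratedDeriv (m+1) g z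
          = z ^ (m+1) * iteratedDeriv (m+1) F z
            - ∑ j ∈ Finset.range (m+1), ((m+1).choose j : ℂ) *
              ((n.descFactorial (m+1-j) : ℂ) * z ^ (n + j) * iteratedDeriv j g z) := by
        rw [hmul, Finset.sum_range_succ]
        simp only [Nat.choose_self, Nat.cast_one, Nat.sub_self, Nat.descFactorial_zero, one_mul]
        ring
      calc Complex.abs z ^ (n + (m+1)) * Complex.abs (iteratedDeriv (m+1) g z)
          = Complex.abs (z ^ (n + (m+1)) * iteratedDeriv (m+1) g z) := by
            rw [map_mul, map_pow]
      _ = Complex.abs (z ^ (m+1) * iteratedDeriv (m+1) F z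
            - ∑ j ∈ Finset.range (m+1), ((m+1).choose j : ℂ) *
              ((n.descFactorial (m+1-j) : ℂ) * z ^ (n + j) * iteratedDeriv j g z)) := by
            rw [htop]
      _ ≤ Complex.abs (z ^ (m+1) * iteratedDeriv (m+1) F z)
            + Complex.abs (∑ j ∈ Finset.range (m+1), ((m+1).choose j : ℂ) *
              ((n.descFactorial (m+1-j) : ℂ) * z ^ (n + j) * iteratedDeriv j g z)) :=
            Complex.abs.sub_le_add _ _
      _ ≤ S + A * C * S := by
          have hpart1 : Complex.abs (z ^ (m+1) * iteratedDeriv (m+1) F z) ≤ S := by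
            rw [map_mul, map_pow]
            calc Complex.abs z ^ (m+1) * Complex.abs (iteratedDeriv (m+1) F z)
                ≤ 1 * Complex.abs (iteratedDeriv (m+1) F z) :=
                  mul_le_mul_of_nonneg_right (pow_le_one₀ (Complex.abs.nonneg z) hz1) (hS0 _)
            _ = Complex.abs (iteratedDeriv (m+1) F z) := one_mul _
            _ ≤ S := by
                rw [hS, Finset.sum_range_succ]
                exact le_add_of_nonneg_of_le (Finset.sum_nonneg fun j _ => hS0 j) le_rfl
          have hpart2 : Complex.abs (∑ j ∈ Finset.range (m+1), ((m+1).choose j : ℂ) *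
              ((n.descFactorial (m+1-j) : ℂ) * z ^ (n + j) * iteratedDeriv j g z))
              ≤ A * C * S := by
            calc Complex.abs (∑ j ∈ Finset.range (m+1), ((m+1).choose j : ℂ) *
                ((n.descFactorial (m+1-j) : ℂ) * z ^ (n + j) * iteratedDeriv j g z))
                ≤ ∑ j ∈ Finset.range (m+1), Complex.abs (((m+1).choose j : ℂ) *
                  ((n.descFactorial (m+1-j) : ℂ) * z ^ (n + j) * iteratedDeriv j g z)) :=
                  Complex.abs.sum_le _ _
            _ ≤ ∑ j ∈ Finset.range (m+1), (((m+1).choose j : ℝ) * (n.descFactorial (m+1-j) : ℝ))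
                  * (C * S) := by
                refine Finset.sum_le_sum fun j hj => ?_
                rw [map_mul, map_mul, map_mul, map_pow, Complex.abs_natCast, Complex.abs_natCast]
                rw [mul_assoc, mul_assoc]
                refine mul_le_mul_of_nonneg_left ?_ (Nat.cast_nonneg _)
                refine mul_le_mul_of_nonneg_left ?_ (Nat.cast_nonneg _)
                calc Complex.abs z ^ (n + j) * Complex.abs (iteratedDeriv j g z)
                    ≤ C * ∑ i ∈ Finset.range (m+1), Complex.abs (iteratedDeriv i F z) :=
                      hC j (by simpa [Nat.lt_succ_iff] using hj) z hz
                _ ≤ C * S := mul_le_mul_of_nonneg_left hSS hC0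
            _ = A * (C * S) := by rw [hA, Finset.sum_mul]
            _ = A * C * S := by ring
          linarith
      _ ≤ (C + (1 + A * C)) * S := by nlinarith [mul_nonneg hC0 hSnn]

lemma taybR {h : ℂ → ℂ} (hd : DifferentiableOn ℂ h (Metric.ball 0 1)) {k : ℕ} (hk : 1 ≤ k)
    {z : ℂ} (hz : z ∈ Metric.ball (0:ℂ) 1) :
    Complex.abs (h z) ≤ (∑ m ∈ Finset.range k, Complex.abs (iteratedDeriv m h 0) / m.factorial)
      + ∫ t in (0:ℝ)..1, Complex.abs (iteratedDeriv k h ((t:ℂ) * z)) := by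
  have hz1 : Complex.abs z ≤ 1 := le_of_lt (by rwa [mem_ball_zero_iff, Complex.norm_eq_abs] at hz)
  rw [tay hd k hk z hz]
  refine le_trans (Complex.abs.add_le _ _) ?_
  have h1 : Complex.abs (∑ m ∈ Finset.range k, iteratedDeriv m h 0 / m.factorial * z ^ m)
      ≤ ∑ m ∈ Finset.range k, Complex.abs (iteratedDeriv m h 0) / m.factorial := by
    refine le_trans (Complex.abs.sum_le _ _) (Finset.sum_le_sum fun m _ => ?_)
    rw [map_mul, map_div₀, map_pow, Complex.abs_natCast]
    calc Complex.abs (iteratedDeriv m h 0) / m.factorial * Complex.abs z ^ m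
        ≤ Complex.abs (iteratedDeriv m h 0) / m.factorial * 1 := by
          apply mul_le_mul_of_nonneg_left (pow_le_one₀ (Complex.abs.nonneg z) hz1)
          positivity
    _ = _ := mul_one _
  have h2 : Complex.abs (z ^ k / (k-1).factorial *
        ∫ t in (0:ℝ)..1, iteratedDeriv k h ((t:ℂ) * z) * (1 - (t:ℂ)) ^ (k-1))
      ≤ ∫ t in (0:ℝ)..1, Complex.abs (iteratedDeriv k h ((t:ℂ) * z)) := by
    rw [map_mul, map_div₀, map_pow, Complex.abs_natCast]
    have hfac : (1:ℝ) ≤ (k-1).factorial := by exact_mod_cast (k-1).factorial_pos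
    have hco : Complex.abs z ^ k / (k-1).factorial ≤ 1 := by
      apply div_le_one_of_le₀ _ (by positivity)
      calc Complex.abs z ^ k ≤ 1 := pow_le_one₀ (Complex.abs.nonneg z) hz1
      _ ≤ _ := hfac
    calc Complex.abs z ^ k / (k-1).factorial *
          Complex.abs (∫ t in (0:ℝ)..1, iteratedDeriv k h ((t:ℂ) * z) * (1 - (t:ℂ)) ^ (k-1))
        ≤ 1 * Complex.abs (∫ t in (0:ℝ)..1, iteratedDeriv k h ((t:ℂ) * z) * (1 - (t:ℂ)) ^ (k-1)) :=
          mul_le_mul_of_nonneg_right hco (Complex.abs.nonneg _)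
    _ = ‖∫ t in (0:ℝ)..1, iteratedDeriv k h ((t:ℂ) * z) * (1 - (t:ℂ)) ^ (k-1)‖ := by
          rw [one_mul, Complex.norm_eq_abs]
    _ ≤ ∫ t in (0:ℝ)..1, ‖iteratedDeriv k h ((t:ℂ) * z) * (1 - (t:ℂ)) ^ (k-1)‖ :=
          intervalIntegral.norm_integral_le_integral_norm zero_le_one
    _ ≤ ∫ t in (0:ℝ)..1, Complex.abs (iteratedDeriv k h ((t:ℂ) * z)) := by
          apply intervalIntegral.integral_mono_on zero_le_one
          · apply ContinuousOn.intervalIntegrable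
            apply ContinuousOn.norm
            exact (contAux hd k hz).mul (Continuous.continuousOn (by continuity))
          · exact ((Complex.continuous_abs.comp_continuousOn (contAux hd k hz))).intervalIntegrable
          · intro t ht
            rw [Complex.norm_eq_abs, map_mul]
            have ht1 : Complex.abs ((1 - (t:ℂ)) ^ (k-1)) ≤ 1 := by
              rw [map_pow]
              apply pow_le_one₀ (Complex.abs.nonneg _)
              rw [show (1:ℂ) - (t:ℂ) = ((1 - t : ℝ):ℂ) by push_cast; ring, Complex.abs_ofReal,
                abs_le]
              constructor <;> [linarith [ht.2]; linarith [ht.1]]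
            calc Complex.abs (iteratedDeriv k h ((t:ℂ) * z)) * Complex.abs ((1 - (t:ℂ)) ^ (k-1))
                ≤ Complex.abs (iteratedDeriv k h ((t:ℂ) * z)) * 1 :=
                  mul_le_mul_of_nonneg_left ht1 (Complex.abs.nonneg _)
            _ = _ := mul_one _
  linarith

lemma toCore {u v : ℂ → ℂ} (hv : ContinuousOn v (Metric.ball (0:ℂ) 1))
    {z : ℂ} (hz : z ∈ Metric.ball (0:ℂ) 1) {a b c : ℝ} (ha : 0 ≤ a) (hb : 0 ≤ b) (hc : 0 ≤ c)
    (h : Complex.abs (u z) ≤ a + b * Complex.abs (v z)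
      + c * ∫ t in (0:ℝ)..1, Complex.abs (v ((t:ℂ) * z))) :
    ENNReal.ofReal (Complex.abs (u z)) ≤ ENNReal.ofReal a
      + ENNReal.ofReal b * ENNReal.ofReal (Complex.abs (v z))
      + ENNReal.ofReal c * ∫⁻ t in Set.Ioc (0:ℝ) 1,
          ENNReal.ofReal (Complex.abs (v ((t:ℂ) * z))) := by
  have hvc : ContinuousOn (fun t : ℝ => Complex.abs (v ((t:ℂ) * z))) (Set.uIcc (0:ℝ) 1) :=
    Complex.continuous_abs.comp_continuousOn
      (hv.comp (Continuous.continuousOn (by continuity)) (fun t ht => memtz hz ht))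
  have hint : IntegrableOn (fun t : ℝ => Complex.abs (v ((t:ℂ) * z))) (Set.Ioc (0:ℝ) 1) :=
    (hvc.intervalIntegrable).1
  have heq : ENNReal.ofReal (∫ t in (0:ℝ)..1, Complex.abs (v ((t:ℂ) * z)))
      = ∫⁻ t in Set.Ioc (0:ℝ) 1, ENNReal.ofReal (Complex.abs (v ((t:ℂ) * z))) := by
    rw [intervalIntegral.integral_of_le zero_le_one]
    exact MeasureTheory.ofReal_integral_eq_lintegral_ofReal hint
      (ae_of_all _ fun t => Complex.abs.nonneg _)
  calc ENNReal.ofReal (Complex.abs (u z))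
      ≤ ENNReal.ofReal (a + b * Complex.abs (v z)
        + c * ∫ t in (0:ℝ)..1, Complex.abs (v ((t:ℂ) * z))) := ENNReal.ofReal_le_ofReal h
  _ ≤ ENNReal.ofReal (a + b * Complex.abs (v z))
      + ENNReal.ofReal (c * ∫ t in (0:ℝ)..1, Complex.abs (v ((t:ℂ) * z))) :=
      ENNReal.ofReal_add_le
  _ ≤ ENNReal.ofReal a + ENNReal.ofReal (b * Complex.abs (v z))
      + ENNReal.ofReal (c * ∫ t in (0:ℝ)..1, Complex.abs (v ((t:ℂ) * z))) := by
      gcongr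
      exact ENNReal.ofReal_add_le
  _ = ENNReal.ofReal a + ENNReal.ofReal b * ENNReal.ofReal (Complex.abs (v z))
      + ENNReal.ofReal c * ENNReal.ofReal (∫ t in (0:ℝ)..1, Complex.abs (v ((t:ℂ) * z))) := by
      rw [ENNReal.ofReal_mul hb, ENNReal.ofReal_mul hc]
  _ = _ := by rw [heq]

theorem S0_eq_zn_S (n : ℕ) (p : ℝ) (hn : 1 ≤ n) (hp : 1 ≤ p) (f : ℂ → ℂ) :
    MemS0 n p f ↔ ∃ g : ℂ → ℂ, MemS n p g ∧
      ∀ z ∈ Metric.ball (0:ℂ) 1, f z = z ^ n * g z := by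
  constructor
  · rintro ⟨⟨hdf, hfin⟩, h0⟩
    set g := dIter f n with hgdef
    have hgd : DifferentiableOn ℂ g (Metric.ball 0 1) := dIterDiff hdf n
    have hfg : ∀ z : ℂ, f z = z ^ n * g z := vanish hdf h0 n le_rfl
    have hFf : (fun w : ℂ => w ^ n * g w) = f := by funext w; exact (hfg w).symm
    refine ⟨g, ⟨hgd, ?_⟩, fun z _ => hfg z⟩
    obtain ⟨C, hC0, hC⟩ := si hgd n n le_rfl
    have hI0 : ∀ z : ℂ, (0:ℝ) ≤ ∫ t in (0:ℝ)..1,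
        Complex.abs (iteratedDeriv n f ((t:ℂ) * z)) := fun z =>
      intervalIntegral.integral_nonneg zero_le_one (fun t _ => Complex.abs.nonneg _)
    apply core hp (iterCont hgd n) (iterCont hdf n) hfin
      (a := ENNReal.ofReal 0) (b := ENNReal.ofReal (4^n * C)) (c := ENNReal.ofReal (4^n * C * n))
      ENNReal.ofReal_ne_top ENNReal.ofReal_ne_top ENNReal.ofReal_ne_top
    intro z hz hhalf
    have h1 : Complex.abs z ^ (n + n) * Complex.abs (iteratedDeriv n g z)
        ≤ C * ∑ j ∈ Finset.range (n+1), Complex.abs (iteratedDeriv j f z) := by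
      have := hC n le_rfl z hz
      rwa [hFf] at this
    have h2 : ((4:ℝ)^n)⁻¹ ≤ Complex.abs z ^ (n+n) := by
      have e1 : ((4:ℝ)^n)⁻¹ = (1/2 : ℝ)^(n+n) := by
        rw [← two_mul, pow_mul, show ((1:ℝ)/2)^2 = (4:ℝ)⁻¹ by norm_num, ← inv_pow]
      rw [e1]
      exact pow_le_pow_left₀ (by norm_num) hhalf _
    have h3 : Complex.abs (iteratedDeriv n g z)
        ≤ 4^n * C * ∑ j ∈ Finset.range (n+1), Complex.abs (iteratedDeriv j f z) := by
      have h4pos : (0:ℝ) < 4^n := by positivity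
      have habs0 : (0:ℝ) ≤ Complex.abs (iteratedDeriv n g z) := Complex.abs.nonneg _
      have hstep : (4:ℝ)^n * (((4:ℝ)^n)⁻¹ * Complex.abs (iteratedDeriv n g z))
          ≤ 4^n * (C * ∑ j ∈ Finset.range (n+1), Complex.abs (iteratedDeriv j f z)) := by
        apply mul_le_mul_of_nonneg_left _ (le_of_lt h4pos)
        exact le_trans (mul_le_mul_of_nonneg_right h2 habs0) h1
      rwa [← mul_assoc, mul_inv_cancel₀ (ne_of_gt h4pos), one_mul, ← mul_assoc] at hstep
    have h4 : ∀ j, j < n → Complex.abs (iteratedDeriv j f z)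
        ≤ ∫ t in (0:ℝ)..1, Complex.abs (iteratedDeriv n f ((t:ℂ) * z)) := by
      intro j hj
      have hjd : DifferentiableOn ℂ (iteratedDeriv j f) (Metric.ball 0 1) :=
        fun w hw => (iterDiffAt hdf j hw).differentiableWithinAt
      have htb := taybR hjd (k := n - j) (by omega) hz
      simp only [iterIter] at htb
      have hzero : ∀ m ∈ Finset.range (n-j),
          Complex.abs (iteratedDeriv (m+j) f 0) / (m.factorial : ℝ) = 0 := by
        intro m hm
        have hmn : m + j < n := by
          have := Finset.mem_range.1 hm
          omega
        rw [h0 (m+j) hmn, map_zero, zero_div]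
      rw [Finset.sum_congr rfl hzero, Finset.sum_const_zero, zero_add,
        show n - j + j = n from by omega] at htb
      exact htb
    have h5 : Complex.abs (iteratedDeriv n g z) ≤ 0
        + (4^n * C) * Complex.abs (iteratedDeriv n f z)
        + (4^n * C * n) * ∫ t in (0:ℝ)..1, Complex.abs (iteratedDeriv n f ((t:ℂ) * z)) := by
      have hsum : (∑ j ∈ Finset.range (n+1), Complex.abs (iteratedDeriv j f z))
          ≤ Complex.abs (iteratedDeriv n f z)
            + n * ∫ t in (0:ℝ)..1, Complex.abs (iteratedDeriv n f ((t:ℂ) * z)) := by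
        rw [Finset.sum_range_succ]
        have : (∑ j ∈ Finset.range n, Complex.abs (iteratedDeriv j f z))
            ≤ ∑ _j ∈ Finset.range n, ∫ t in (0:ℝ)..1,
              Complex.abs (iteratedDeriv n f ((t:ℂ) * z)) :=
          Finset.sum_le_sum fun j hj => h4 j (Finset.mem_range.1 hj)
        rw [Finset.sum_const, Finset.card_range, nsmul_eq_mul] at this
        linarith
      have h4nC : (0:ℝ) ≤ 4^n * C := by positivity
      nlinarith [mul_le_mul_of_nonneg_left hsum h4nC]
    have := toCore (iterCont hdf n) hz le_rfl (by positivity : (0:ℝ) ≤ 4^n * C)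
      (by positivity : (0:ℝ) ≤ 4^n * C * n) h5
    simpa using this
  · rintro ⟨g, ⟨hgd, hgfin⟩, hfg⟩
    have hF : Set.EqOn f (fun w : ℂ => w ^ n * g w) (Metric.ball 0 1) := fun z hz => hfg z hz
    have hfd : DifferentiableOn ℂ f (Metric.ball 0 1) :=
      DifferentiableOn.congr (((differentiable_pow n).differentiableOn).mul hgd) hF
    have h0c : (0:ℂ) ∈ Metric.ball (0:ℂ) 1 := mem_ball_self one_pos
    refine ⟨⟨hfd, ?_⟩, ?_⟩
    · set D : ℕ → ℝ := fun k => ∑ m ∈ Finset.range (n-k),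
        Complex.abs (iteratedDeriv (m+k) g 0) / (m.factorial : ℝ) with hD
      have hD0 : ∀ k, 0 ≤ D k := fun k => Finset.sum_nonneg fun m _ => by positivity
      set cc : ℕ → ℝ := fun k => ((n.choose k : ℝ) * (n.descFactorial (n-k) : ℝ)) with hcc
      have hcc0 : ∀ k, 0 ≤ cc k := fun k => by rw [hcc]; positivity
      set a0 : ℝ := ∑ k ∈ Finset.range n, cc k * D k with ha0
      have ha00 : 0 ≤ a0 := Finset.sum_nonneg fun k _ => mul_nonneg (hcc0 k) (hD0 k)
      set c0 : ℝ := ∑ k ∈ Finset.range n, cc k with hc0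
      have hc00 : 0 ≤ c0 := Finset.sum_nonneg fun k _ => hcc0 k
      apply core hp (iterCont hfd n) (iterCont hgd n) hgfin
        (a := ENNReal.ofReal a0) (b := ENNReal.ofReal 1) (c := ENNReal.ofReal c0)
        ENNReal.ofReal_ne_top ENNReal.ofReal_ne_top ENNReal.ofReal_ne_top
      intro z hz _
      have hz1 : Complex.abs z ≤ 1 :=
        le_of_lt (by rwa [mem_ball_zero_iff, Complex.norm_eq_abs] at hz)
      have hIg0 : (0:ℝ) ≤ ∫ t in (0:ℝ)..1, Complex.abs (iteratedDeriv n g ((t:ℂ) * z)) :=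
        intervalIntegral.integral_nonneg zero_le_one (fun t _ => Complex.abs.nonneg _)
      have h4 : ∀ k, k < n → Complex.abs (iteratedDeriv k g z)
          ≤ D k + ∫ t in (0:ℝ)..1, Complex.abs (iteratedDeriv n g ((t:ℂ) * z)) := by
        intro k hk
        have hkd : DifferentiableOn ℂ (iteratedDeriv k g) (Metric.ball 0 1) :=
          fun w hw => (iterDiffAt hgd k hw).differentiableWithinAt
        have htb := taybR hkd (k := n - k) (by omega) hz
        simp only [iterIter] at htb
        rw [show n - k + k = n from by omega] at htb
        exact htb
      have h5 : Complex.abs (iteratedDeriv n f z) ≤ a0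
          + 1 * Complex.abs (iteratedDeriv n g z)
          + c0 * ∫ t in (0:ℝ)..1, Complex.abs (iteratedDeriv n g ((t:ℂ) * z)) := by
        have hfz : iteratedDeriv n f z = iteratedDeriv n (fun w => w ^ n * g w) z :=
          iterCongr hF n hz
        rw [hfz, leib hgd n n le_rfl z hz]
        calc Complex.abs (∑ k ∈ Finset.range (n+1), (n.choose k : ℂ) *
              ((n.descFactorial (n-k) : ℂ) * z ^ (n - (n-k)) * iteratedDeriv k g z))
            ≤ ∑ k ∈ Finset.range (n+1), Complex.abs ((n.choose k : ℂ) *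
              ((n.descFactorial (n-k) : ℂ) * z ^ (n - (n-k)) * iteratedDeriv k g z)) :=
              Complex.abs.sum_le _ _
        _ ≤ ∑ k ∈ Finset.range (n+1), cc k * Complex.abs (iteratedDeriv k g z) := by
              refine Finset.sum_le_sum fun k hk => ?_
              rw [map_mul, map_mul, map_mul, map_pow, Complex.abs_natCast, Complex.abs_natCast,
                hcc]
              have : Complex.abs z ^ (n - (n-k)) * Complex.abs (iteratedDeriv k g z)
                  ≤ Complex.abs (iteratedDeriv k g z) := by
                calc Complex.abs z ^ (n - (n-k)) * Complex.abs (iteratedDeriv k g z)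
                    ≤ 1 * Complex.abs (iteratedDeriv k g z) :=
                      mul_le_mul_of_nonneg_right
                        (pow_le_one₀ (Complex.abs.nonneg z) hz1) (Complex.abs.nonneg _)
                _ = _ := one_mul _
              calc (n.choose k : ℝ) * ((n.descFactorial (n-k) : ℝ) *
                    Complex.abs z ^ (n - (n-k)) * Complex.abs (iteratedDeriv k g z))
                  = (n.choose k : ℝ) * (n.descFactorial (n-k) : ℝ) *
                    (Complex.abs z ^ (n - (n-k)) * Complex.abs (iteratedDeriv k g z)) := by ring
              _ ≤ (n.choose k : ℝ) * (n.descFactorial (n-k) : ℝ) *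
                    Complex.abs (iteratedDeriv k g z) := by
                  apply mul_le_mul_of_nonneg_left this
                  positivity
        _ ≤ a0 + 1 * Complex.abs (iteratedDeriv n g z)
              + c0 * ∫ t in (0:ℝ)..1, Complex.abs (iteratedDeriv n g ((t:ℂ) * z)) := by
              rw [Finset.sum_range_succ]
              have htop : cc n = 1 := by simp [hcc]
              have hrest : (∑ k ∈ Finset.range n, cc k * Complex.abs (iteratedDeriv k g z))
                  ≤ a0 + c0 * ∫ t in (0:ℝ)..1,
                    Complex.abs (iteratedDeriv n g ((t:ℂ) * z)) := by
                rw [ha0, hc0, Finset.sum_mul, ← Finset.sum_add_distrib]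
                refine Finset.sum_le_sum fun k hk => ?_
                rw [← mul_add]
                exact mul_le_mul_of_nonneg_left (h4 k (Finset.mem_range.1 hk)) (hcc0 k)
              rw [htop]
              linarith
      exact toCore (iterCont hgd n) hz ha00 zero_le_one hc00 h5
    · intro m hm
      have h1 : iteratedDeriv m f 0 = iteratedDeriv m (fun w => w ^ n * g w) 0 :=
        iterCongr hF m h0c
      rw [h1, leib hgd n m (by omega) 0 h0c]
      apply Finset.sum_eq_zero
      intro k hk
      have hk' : k ≤ m := by simpa [Nat.lt_succ_iff] using hk
      have : (0:ℂ) ^ (n - (m-k)) = 0 := zero_pow (by omega)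
      rw [this]
      ring
end
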